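/- arXiv:2308.09344 — 6 statements merged into one kernel-verified Lean document; each statement's English description precedes it below -/
import Mathlib

section
/- For every permutation x in S_n, applying West's stack-sorting map s at most n-1 times yields the identity permutation. -/
/-- `isoOrd p q` : `q` is order-isomorphic to `p`. -/
def isoOrd (p q : List ℕ) : Bool :=
  (p.length == q.length) &&
    (List.range p.length).all fun i =>
      (List.range p.length).all fun j =>
        decide ((p.getD i 0 < p.getD j 0) ↔ (q.getD i 0 < q.getD j 0))

/-- `containsPat p w` : the word `w` contains an occurrence of the classical pattern `p`. -/
def containsPat (p w : List ℕ) : Bool :=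
  (w.sublistsLen p.length).any (isoOrd p)

/-- Pop phase of the right-greedy `T`-avoiding stack: with next input `a`,
pop entries from the top of the stack while pushing `a` would create a pattern of `T`
(read from top to bottom).  Returns the remaining stack and the popped entries in output order. -/
def popPhase (T : List (List ℕ)) (a : ℕ) : List ℕ → List ℕ × List ℕ
  | [] => ([], [])
  | b :: s =>
    if T.any (fun p => containsPat p (a :: b :: s)) then
      let r := popPhase T a s
      (r.1, b :: r.2)
    else (b :: s, [])

/-- Main loop of the right-greedy `T`-avoiding stack map. -/
def stkAux (T : List (List ℕ)) : List ℕ → List ℕ → List ℕ → List ℕ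
  | [], stack, out => out ++ stack
  | a :: rest, stack, out =>
    let r := popPhase T a stack
    stkAux T rest (a :: r.1) (out ++ r.2)

/-- The generalized stack-sorting map `s_T` : the input is pushed right-greedily through a
stack which must avoid (read from top to bottom) every pattern in `T`. -/
def sT (T : List (List ℕ)) (x : List ℕ) : List ℕ := stkAux T x [] []

/-- West's stack-sorting map: the stack must be increasing from top to bottom,
i.e. must avoid `21` read from top to bottom. -/
def westSort (x : List ℕ) : List ℕ := sT [[2,1]] x

/-- `x` is a permutation of `{1,…,n}`, written as a list. -/
def IsPermList (n : ℕ) (x : List ℕ) : Prop := x.Perm (List.range' 1 n)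

/-- The identity permutation `1 2 … n`. -/
def idPerm (n : ℕ) : List ℕ := List.range' 1 n

/-- `x` contains the bivincular pattern `132*` : positions `i < j` (0-based) with
`x i < x (j+1)` and `x j = x (j+1) + 1`. -/
def Has132Star (x : List ℕ) : Prop :=
  ∃ i j, i < j ∧ j + 1 < x.length ∧ x.getD i 0 < x.getD (j+1) 0 ∧
    x.getD j 0 = x.getD (j+1) 0 + 1

/-- `x` contains the bivincular pattern `123*` : positions `i < j` (0-based) with
`x i < x j` and `x (j+1) = x j + 1`. -/
def Has123Star (x : List ℕ) : Prop :=
  ∃ i j, i < j ∧ j + 1 < x.length ∧ x.getD i 0 < x.getD j 0 ∧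
    x.getD (j+1) 0 = x.getD j 0 + 1

/-- Boolean version of `Has132Star`. -/
def has132star (x : List ℕ) : Bool :=
  (List.range x.length).any fun j =>
    decide (j + 1 < x.length) && (x.getD j 0 == x.getD (j+1) 0 + 1) &&
      (List.range j).any fun i => decide (x.getD i 0 < x.getD (j+1) 0)

/-- Boolean version of `Has123Star`. -/
def has123star (x : List ℕ) : Bool :=
  (List.range x.length).any fun j =>
    decide (j + 1 < x.length) && (x.getD (j+1) 0 == x.getD j 0 + 1) &&
      (List.range j).any fun i => decide (x.getD i 0 < x.getD j 0)

section WestAux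

lemma isoOrd21 (u v : ℕ) : isoOrd [2,1] [u,v] = decide (v < u) := by
  simp [isoOrd, List.range_succ]
  by_cases h : v < u <;> simp [h] <;> omega

lemma contains21_iff (w : List ℕ) :
    containsPat [2,1] w = true ↔ ¬ w.Pairwise (· ≤ ·) := by
  rw [List.pairwise_iff_forall_sublist]
  constructor
  · intro h hs
    simp only [containsPat, List.any_eq_true] at h
    obtain ⟨q, hq, hiso⟩ := h
    rw [List.mem_sublistsLen] at hq
    obtain ⟨hsub, hlen⟩ := hq
    match q, hlen with
    | [u, v], _ =>
      rw [isoOrd21] at hiso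
      have := hs hsub
      simp at hiso
      omega
  · intro h
    by_contra hc
    apply h
    intro a b hsub
    by_contra hab
    apply hc
    simp only [containsPat, List.any_eq_true]
    exact ⟨[a,b], List.mem_sublistsLen.mpr ⟨hsub, rfl⟩, by rw [isoOrd21]; simp; omega⟩

lemma pop_eq (a : ℕ) : ∀ s : List ℕ, s.Pairwise (· ≤ ·) →
    popPhase [[2,1]] a s = (s.dropWhile (· < a), s.takeWhile (· < a)) := by
  intro s
  induction s with
  | nil => intro _; rfl
  | cons b s ih =>
    intro hs
    rw [List.pairwise_cons] at hs
    by_cases hba : b < a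
    · have hcond : ¬ (a :: b :: s).Pairwise (· ≤ ·) := by
        rw [List.pairwise_cons]
        intro ⟨h1, _⟩
        have := h1 b (by simp)
        omega
      rw [← contains21_iff] at hcond
      simp only [popPhase, List.any_cons, List.any_nil, Bool.or_false, hcond, if_true,
        ih hs.2, List.dropWhile_cons, List.takeWhile_cons]
      simp [hba]
    · have hsorted : (a :: b :: s).Pairwise (· ≤ ·) := by
        rw [List.pairwise_cons]
        refine ⟨?_, List.pairwise_cons.mpr hs⟩
        intro c hc
        rcases List.mem_cons.mp hc with h | h
        · omega
        · have := hs.1 c h; omega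
      have hcond : containsPat [2,1] (a :: b :: s) = false := by
        rw [Bool.eq_false_iff]
        intro h
        exact (contains21_iff _).mp h hsorted
      simp only [popPhase, List.any_cons, List.any_nil, Bool.or_false, hcond,
        Bool.false_eq_true, if_false, List.dropWhile_cons, List.takeWhile_cons]
      simp [hba]

lemma mem_dropWhile_lt (a : ℕ) : ∀ s : List ℕ, s.Pairwise (· ≤ ·) →
    ∀ x ∈ s.dropWhile (· < a), a ≤ x := by
  intro s
  induction s with
  | nil => simp
  | cons b s ih =>
    intro hs x hx
    rw [List.pairwise_cons] at hs
    rw [List.dropWhile_cons] at hx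
    by_cases hba : b < a
    · simp only [hba, decide_true] at hx
      rw [if_pos (by simpa using hba)] at hx
      exact ih hs.2 x hx
    · rw [if_neg (by simpa using hba)] at hx
      rcases List.mem_cons.mp hx with h | h
      · omega
      · have := hs.1 x h; omega

lemma sorted_push (a : ℕ) (s : List ℕ) (hs : s.Pairwise (· ≤ ·)) :
    (a :: s.dropWhile (· < a)).Pairwise (· ≤ ·) := by
  rw [List.pairwise_cons]
  exact ⟨mem_dropWhile_lt a s hs, hs.sublist (List.dropWhile_sublist _)⟩

lemma stk_cons (a : ℕ) (rest stack out : List ℕ) (hs : stack.Pairwise (· ≤ ·)) :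
    stkAux [[2,1]] (a :: rest) stack out =
      stkAux [[2,1]] rest (a :: stack.dropWhile (· < a)) (out ++ stack.takeWhile (· < a)) := by
  simp [stkAux, pop_eq a stack hs]

lemma stk_perm : ∀ (w st out : List ℕ), st.Pairwise (· ≤ ·) →
    (stkAux [[2,1]] w st out).Perm (out ++ st ++ w) := by
  intro w
  induction w with
  | nil => intro st out _; simp [stkAux]
  | cons a w ih =>
    intro st out hs
    rw [stk_cons a w st out hs]
    refine (ih _ _ (sorted_push a st hs)).trans ?_
    rw [List.perm_iff_count]
    intro b
    have hsplit : st.takeWhile (· < a) ++ st.dropWhile (· < a) = st :=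
      List.takeWhile_append_dropWhile
    have : List.count b (st.takeWhile (· < a)) + List.count b (st.dropWhile (· < a))
        = List.count b st := by rw [← List.count_append, hsplit]
    simp [List.count_append, List.count_cons]
    omega

lemma stk_append_max (M : ℕ) : ∀ (w st out : List ℕ), st.Pairwise (· ≤ ·) →
    (∀ e ∈ st, e < M) → (∀ e ∈ w, e < M) →
    stkAux [[2,1]] (w ++ [M]) st out = stkAux [[2,1]] w st out ++ [M] := by
  intro w
  induction w with
  | nil =>
    intro st out hs hst _
    have hdrop : st.dropWhile (· < M) = [] :=
      List.dropWhile_eq_nil_iff.mpr (fun x hx => by simp [hst x hx])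
    have htake : st.takeWhile (· < M) = st := by
      have := List.takeWhile_append_dropWhile (p := fun x => decide (x < M)) (l := st)
      rw [hdrop] at this; simpa using this
    rw [List.nil_append, stk_cons M [] st out hs, hdrop, htake]
    simp [stkAux]
  | cons a w ih =>
    intro st out hs hst hw
    have ha : a < M := hw a (by simp)
    rw [List.cons_append, stk_cons a (w ++ [M]) st out hs, stk_cons a w st out hs]
    apply ih _ _ (sorted_push a st hs)
    · intro e he
      rcases List.mem_cons.mp he with h | h
      · omega
      · exact hst e ((List.dropWhile_sublist _).subset h)
    · exact fun e he => hw e (by simp [he])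

lemma stk_run_small : ∀ (L st out : List ℕ), st.Pairwise (· ≤ ·) →
    ∃ st' out', (∀ rest, stkAux [[2,1]] (L ++ rest) st out = stkAux [[2,1]] rest st' out') ∧
      st'.Pairwise (· ≤ ·) ∧ (∀ e ∈ st', e ∈ st ∨ e ∈ L) := by
  intro L
  induction L with
  | nil =>
    intro st out hs
    exact ⟨st, out, fun rest => by simp, hs, fun e he => Or.inl he⟩
  | cons a L ih =>
    intro st out hs
    obtain ⟨st', out', heq, hs', hmem⟩ :=
      ih (a :: st.dropWhile (· < a)) (out ++ st.takeWhile (· < a)) (sorted_push a st hs)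
    refine ⟨st', out', fun rest => ?_, hs', ?_⟩
    · rw [List.cons_append, stk_cons a (L ++ rest) st out hs, heq rest]
    · intro e he
      rcases hmem e he with h | h
      · rcases List.mem_cons.mp h with h | h
        · right; simp [h]
        · left; exact (List.dropWhile_sublist _).subset h
      · right; simp [h]

lemma stk_below (M : ℕ) : ∀ (R st out : List ℕ), (st ++ [M]).Pairwise (· ≤ ·) →
    (∀ e ∈ R, e < M) →
    ∃ z, stkAux [[2,1]] R (st ++ [M]) out = z ++ [M] := by
  intro R
  induction R with
  | nil =>
    intro st out _ _
    exact ⟨out ++ st, by simp [stkAux]⟩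
  | cons a R ih =>
    intro st out hs hR
    have ha : a < M := hR a (by simp)
    have hdrop : (st ++ [M]).dropWhile (· < a) = st.dropWhile (· < a) ++ [M] := by
      rw [List.dropWhile_append]
      split
      · next h =>
        rw [List.isEmpty_iff] at h
        rw [h]
        simp [List.dropWhile, show ¬ M < a by omega]
      · rfl
    rw [stk_cons a R _ out hs, hdrop]
    have hsort2 : ((a :: st.dropWhile (· < a)) ++ [M]).Pairwise (· ≤ ·) := by
      have := sorted_push a (st ++ [M]) hs
      rw [hdrop] at this
      simpa using this
    obtain ⟨z, hz⟩ := ih (a :: st.dropWhile (· < a)) _ hsort2 (fun e he => hR e (by simp [he]))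
    exact ⟨z, by simpa using hz⟩

lemma west_ends_max (M : ℕ) (L R : List ℕ) (hL : ∀ e ∈ L, e < M) (hR : ∀ e ∈ R, e < M) :
    ∃ z, westSort (L ++ M :: R) = z ++ [M] := by
  obtain ⟨st', out', heq, hs', hmem⟩ := stk_run_small L [] [] List.Pairwise.nil
  have hst' : ∀ e ∈ st', e < M := by
    intro e he
    rcases hmem e he with h | h
    · simp at h
    · exact hL e h
  have hdrop : st'.dropWhile (· < M) = [] :=
    List.dropWhile_eq_nil_iff.mpr (fun x hx => by simp [hst' x hx])
  unfold westSort sT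
  rw [heq (M :: R), stk_cons M R st' out' hs', hdrop]
  have : (M :: ([] : List ℕ)) = [] ++ [M] := rfl
  obtain ⟨z, hz⟩ := stk_below M R [] (out' ++ st'.takeWhile (· < M))
    (by simp) hR
  exact ⟨z, by simpa using hz⟩

lemma westSort_perm (x : List ℕ) : (westSort x).Perm x := by
  have := stk_perm x [] [] List.Pairwise.nil
  simpa [westSort, sT] using this

lemma westSort_append_range (K : ℕ) : ∀ (j : ℕ) (y : List ℕ), (∀ e ∈ y, e ≤ K) →
    westSort (y ++ List.range' (K+1) j) = westSort y ++ List.range' (K+1) j := by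
  intro j
  induction j with
  | zero => intro y _; simp
  | succ j ih =>
    intro y hy
    rw [List.range'_concat]
    have hlt : ∀ e ∈ y ++ List.range' (K+1) j, e < K + 1 + 1 * j := by
      intro e he
      rcases List.mem_append.mp he with h | h
      · have := hy e h; omega
      · have := List.mem_range'_1.mp h; omega
    have := stk_append_max (K + 1 + 1 * j) (y ++ List.range' (K+1) j) [] []
      List.Pairwise.nil (by simp) hlt
    unfold westSort sT
    rw [← List.append_assoc, this]
    unfold westSort sT at ih
    rw [ih y hy, List.append_assoc]

end WestAux

lemma west_claim (n : ℕ) : ∀ m, m ≤ n → ∀ y : List ℕ, y.Perm (List.range' 1 m) →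
    westSort^[m-1] (y ++ List.range' (m+1) (n-m)) = idPerm n := by
  intro m
  induction m with
  | zero =>
    intro _ y hy
    have hy0 : y = [] := List.perm_nil.mp (by simpa using hy)
    subst hy0
    simp [idPerm]
  | succ m ih =>
    intro hmn y hy
    rcases Nat.eq_zero_or_pos m with hm0 | hmpos
    · subst hm0
      have hy1 : y = [1] := List.perm_singleton.mp (by simpa using hy)
      subst hy1
      have hn1 : n - 1 + 1 = n := by omega
      simp only [Nat.sub_self, Function.iterate_zero, id_eq, idPerm]
      rw [show (1 : ℕ) + 1 = 2 by rfl]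
      rw [← hn1, List.range'_succ]
      simp
    · -- m ≥ 1
      have hmem : m + 1 ∈ y := hy.mem_iff.mpr (List.mem_range'_1.mpr (by omega))
      obtain ⟨L, R, hLR⟩ := List.append_of_mem hmem
      have hnodup : y.Nodup := hy.symm.nodup (List.nodup_range' (s := 1) (n := m+1))
      have hbound : ∀ e ∈ y, e ≤ m + 1 := by
        intro e he
        have := List.mem_range'_1.mp (hy.mem_iff.mp he)
        omega
      have hL : ∀ e ∈ L, e < m + 1 := by
        intro e he
        have hey : e ∈ y := by rw [hLR]; simp [he]
        have hne : e ≠ m + 1 := by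
          rintro rfl
          rw [hLR] at hnodup
          exact absurd ((List.nodup_append.mp hnodup).2.2 _ he (m+1) (by simp) rfl) (fun h => h)
        have := hbound e hey; omega
      have hR : ∀ e ∈ R, e < m + 1 := by
        intro e he
        have hey : e ∈ y := by rw [hLR]; simp [he]
        have hne : e ≠ m + 1 := by
          rintro rfl
          have := List.nodup_middle.mp (hLR ▸ hnodup)
          rw [List.nodup_cons] at this
          exact this.1 (by simp [he])
        have := hbound e hey; omega
      obtain ⟨z, hz⟩ := west_ends_max (m+1) L R hL hR
      rw [← hLR] at hz
      -- z is a permutation of range' 1 m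
      have hzperm : z.Perm (List.range' 1 m) := by
        have h1 : (z ++ [m+1]).Perm (List.range' 1 m ++ [m+1]) := by
          rw [← hz]
          refine (westSort_perm y).trans (hy.trans ?_)
          have : List.range' 1 (m+1) = List.range' 1 m ++ [1 + 1 * m] := List.range'_concat (s := 1) (n := m)
          rw [this, show 1 + 1 * m = m + 1 by omega]
        exact (List.perm_append_right_iff _).mp h1
      -- one application of westSort
      have hstep : westSort (y ++ List.range' (m+1+1) (n-(m+1))) =
          z ++ List.range' (m+1) (n-m) := by
        rw [westSort_append_range (m+1) (n-(m+1)) y hbound, hz, List.append_assoc]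
        congr 1
        have : n - m = (n - (m+1)) + 1 := by omega
        rw [this, List.range'_succ]
        rfl
      have hit : m + 1 - 1 = (m - 1) + 1 := by omega
      rw [hit, Function.iterate_succ_apply, hstep]
      exact ih (by omega) z hzperm

/-- Applying West's stack-sorting map `n - 1` times to any permutation of length `n`
yields the identity permutation. -/
theorem west_iterate_sorts (n : ℕ) (x : List ℕ) (hx : IsPermList n x) :
    westSort^[n-1] x = idPerm n := by
  have := west_claim n n le_rfl x hx
  simpa using this
end

section
/- If x_i is a left-to-right minimum of x and x_i appears to the left of x_j in s_{132,321}(x), then j < i. -/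
-- L3
lemma popPhase_recomb (T : List (List ℕ)) (a : ℕ) :
    ∀ s : List ℕ, (popPhase T a s).2 ++ (popPhase T a s).1 = s
  | [] => rfl
  | b :: s => by
    rw [popPhase]
    split
    · simpa using popPhase_recomb T a s
    · simp

-- L1
lemma descent_of_contains {p w : List ℕ} (hp : p = [1,3,2] ∨ p = [3,2,1])
    (h : containsPat p w = true) : ∃ u b c, [u,b,c].Sublist w ∧ c < b := by
  unfold containsPat at h
  rw [List.any_eq_true] at h
  obtain ⟨q, hq, hiso⟩ := h
  rw [List.mem_sublistsLen] at hq
  have hlen : q.length = 3 := by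
    rcases hp with rfl | rfl <;> exact hq.2
  obtain ⟨u, b, c, rfl⟩ := List.length_eq_three.mp hlen
  refine ⟨u, b, c, hq.1, ?_⟩
  unfold isoOrd at hiso
  rw [Bool.and_eq_true, List.all_eq_true] at hiso
  rcases hp with rfl | rfl
  · have h2 := hiso.2 2 (by simp)
    rw [List.all_eq_true] at h2
    have h21 := h2 1 (by simp)
    simp at h21
    omega
  · have h2 := hiso.2 2 (by simp)
    rw [List.all_eq_true] at h2
    have h21 := h2 1 (by simp)
    simp at h21
    omega

-- L2
lemma contains132_of {w : List ℕ} {u c d : ℕ} (hs : [u,c,d].Sublist w)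
    (h1 : u < d) (h2 : d < c) : containsPat [1,3,2] w = true := by
  unfold containsPat
  rw [List.any_eq_true]
  refine ⟨[u,c,d], List.mem_sublistsLen.mpr ⟨hs, rfl⟩, ?_⟩
  unfold isoOrd
  rw [Bool.and_eq_true, List.all_eq_true]
  refine ⟨by simp, ?_⟩
  intro i hi
  rw [List.all_eq_true]
  intro jj hj
  simp at hi hj
  interval_cases i <;> interval_cases jj <;> simp <;> omega

lemma cond_false_of_sorted {a v : ℕ} {s2 : List ℕ}
    (hs : List.Pairwise (· < ·) (v :: s2)) :
    ([[1,3,2],[3,2,1]].any (fun p => containsPat p (a :: v :: s2))) = false := by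
  by_contra h
  rw [Bool.not_eq_false, List.any_eq_true] at h
  obtain ⟨p, hp, hc⟩ := h
  simp only [List.mem_cons, List.not_mem_nil, or_false] at hp
  obtain ⟨u, b, c, hsub, hcb⟩ := descent_of_contains hp hc
  have hbc : [b, c].Sublist (v :: s2) := by
    rcases List.sublist_cons_iff.mp hsub with h' | ⟨r, hr, hr2⟩
    · exact ((List.sublist_cons_self u [b,c]).trans h')
    · cases hr; exact hr2
  have := List.pairwise_iff_forall_sublist.mp hs hbc
  omega

lemma popPhase_split (a v : ℕ) (s2 : List ℕ) (hs : List.Pairwise (· < ·) (v :: s2)) :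
    ∀ s1 : List ℕ, ∃ s1',
      (popPhase [[1,3,2],[3,2,1]] a (s1 ++ v :: s2)).1 = s1' ++ v :: s2
  | [] => by
    rw [List.nil_append, popPhase, if_neg (by rw [cond_false_of_sorted hs]; simp)]
    exact ⟨[], rfl⟩
  | b :: s1 => by
    obtain ⟨s1', h⟩ := popPhase_split a v s2 hs s1
    rw [List.cons_append, popPhase]
    split
    · exact ⟨s1', by simpa using h⟩
    · exact ⟨b :: s1, rfl⟩

lemma pop_min_sorted (v : ℕ) :
    ∀ s : List ℕ, s.Nodup → (∀ b ∈ s, v < b) →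
      List.Pairwise (· < ·) ((popPhase [[1,3,2],[3,2,1]] v s).1)
  | [] => by intro _ _; simp [popPhase]
  | b :: s => by
    intro hnd hall
    rw [popPhase]
    split
    · simpa using pop_min_sorted v s hnd.of_cons
        (fun c hc => hall c (List.mem_cons_of_mem _ hc))
    · rename_i hc
      simp only
      rw [List.pairwise_iff_forall_sublist]
      intro c d hcd
      by_contra hlt
      push_neg at hlt
      have hne : c ≠ d := List.pairwise_iff_forall_sublist.mp hnd hcd
      have hdc : d < c := lt_of_le_of_ne hlt (Ne.symm hne)
      have hsub : [v, c, d].Sublist (v :: b :: s) := List.cons_sublist_cons.mpr hcd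
      have hvd : v < d := hall d (hcd.subset (by simp))
      have h132 := contains132_of hsub hvd hdc
      exact hc (by simp [h132])

def run (T : List (List ℕ)) : List ℕ → List ℕ → List ℕ → List ℕ × List ℕ
  | [], stack, out => (stack, out)
  | a :: rest, stack, out =>
      run T rest (a :: (popPhase T a stack).1) (out ++ (popPhase T a stack).2)

lemma stkAux_append (T : List (List ℕ)) : ∀ (l1 l2 stack out : List ℕ),
    stkAux T (l1 ++ l2) stack out
      = stkAux T l2 (run T l1 stack out).1 (run T l1 stack out).2
  | [], _, _, _ => rfl
  | a :: l1, l2, stack, out => by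
    rw [List.cons_append, stkAux, run]
    exact stkAux_append T l1 l2 _ _

lemma run_perm (T : List (List ℕ)) : ∀ (l stack out : List ℕ),
    ((run T l stack out).2 ++ (run T l stack out).1).Perm (out ++ stack ++ l)
  | [], stack, out => by simp [run]
  | a :: l, stack, out => by
    rw [run]
    refine (run_perm T l _ _).trans ?_
    have h := popPhase_recomb T a stack
    refine List.perm_iff_count.mpr fun y => ?_
    have hc : List.count y stack
        = List.count y (popPhase T a stack).2 + List.count y (popPhase T a stack).1 := by
      conv_lhs => rw [← h]
      simp [List.count_append]
    simp [List.count_append, List.count_cons, hc]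
    ring

lemma stkAux_keeps (v : ℕ) (s2 : List ℕ) (hs : List.Pairwise (· < ·) (v :: s2)) :
    ∀ (rest s1 out : List ℕ), ∃ w : List ℕ,
      stkAux [[1,3,2],[3,2,1]] rest (s1 ++ v :: s2) out = out ++ (w ++ v :: s2)
        ∧ w.Perm (rest ++ s1)
  | [], s1, out => ⟨s1, by simp [stkAux], by simp⟩
  | a :: rest, s1, out => by
    obtain ⟨s1', hsp⟩ := popPhase_split a v s2 hs s1
    have hrec := popPhase_recomb [[1,3,2],[3,2,1]] a (s1 ++ v :: s2)
    set pp := (popPhase [[1,3,2],[3,2,1]] a (s1 ++ v :: s2)).2 with hppdef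
    have hpp : pp ++ s1' = s1 := by
      apply List.append_cancel_right (bs := v :: s2)
      rw [List.append_assoc, ← hsp, hrec]
    obtain ⟨w', hw', hwp'⟩ := stkAux_keeps v s2 hs rest (a :: s1') (out ++ pp)
    refine ⟨pp ++ w', ?_, ?_⟩
    · rw [stkAux]
      simp only [← hppdef, hsp]
      have : a :: (s1' ++ v :: s2) = (a :: s1') ++ v :: s2 := rfl
      rw [this, hw']
      simp [List.append_assoc]
    · refine ((hwp'.append_left pp).trans ?_)
      refine List.perm_iff_count.mpr fun y => ?_
      rw [← hpp]
      simp [List.count_append, List.count_cons]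
      ring

lemma indexOf_append_left {a : ℕ} :
    ∀ {l₁ : List ℕ} (l₂ : List ℕ), a ∈ l₁ →
      (l₁ ++ l₂).idxOf a = l₁.idxOf a
  | [], _, h => by simp at h
  | b :: l₁, l₂, h => by
    by_cases hab : a = b
    · subst hab; simp [List.idxOf_cons_self]
    · rw [List.mem_cons] at h
      rw [List.cons_append, List.idxOf_cons_ne _ (by exact fun hh => hab hh.symm),
        List.idxOf_cons_ne _ (by exact fun hh => hab hh.symm),
        indexOf_append_left l₂ (h.resolve_left hab)]

/-- If `x i` is a left-to-right minimum of `x` and `x i` appears to the left of `x j`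
in `s_{132,321}(x)`, then `j < i`  (indices `0`-based). -/
theorem ltr_min_exits_last (n : ℕ) (x : List ℕ) (hx : IsPermList n x)
    (i j : ℕ) (hi : i < x.length) (hj : j < x.length)
    (hmin : ∀ k < i, x.getD i 0 < x.getD k 0)
    (hleft : (sT [[1,3,2],[3,2,1]] x).idxOf (x.getD i 0) <
      (sT [[1,3,2],[3,2,1]] x).idxOf (x.getD j 0)) :
    j < i := by
  have hx : x.Perm (List.range' 1 n) := hx
  by_contra hij
  push_neg at hij
  rcases eq_or_lt_of_le hij with rfl | hij'
  · exact absurd hleft (lt_irrefl _)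
  have hnd : x.Nodup := hx.nodup_iff.mpr (List.nodup_range' (s := 1) (n := n))
  set T : List (List ℕ) := [[1,3,2],[3,2,1]] with hT
  set v := x.getD i 0 with hv
  set u := x.getD j 0 with hu
  set pre := x.take i with hpre
  set suf := x.drop (i+1) with hsuf
  have hvget : v = x[i] := List.getD_eq_getElem x 0 hi
  have hsplit : x = pre ++ v :: suf := by
    rw [hpre, hsuf, hvget, ← List.drop_eq_getElem_cons hi, List.take_append_drop]
  have huget : u = x[j] := List.getD_eq_getElem x 0 hj
  have hus : u ∈ suf := by
    have hux : u ∈ x := by rw [huget]; exact List.getElem_mem hj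
    rw [hsplit] at hux
    rcases List.mem_append.mp hux with h' | h'
    · exfalso
      obtain ⟨k, hk, hbk⟩ := List.mem_iff_getElem.mp h'
      have hk' : k < i := by simp [hpre, List.length_take] at hk; omega
      have hxk : x[k]'(by omega) = x[j] := by
        rw [← huget, ← hbk]
        exact List.getElem_take.symm
      have := (hnd.getElem_inj_iff).mp hxk
      omega
    · rcases List.mem_cons.mp h' with h'' | h''
      · exfalso
        have : x[i] = x[j] := by rw [← hvget, ← huget, h'']
        have := (hnd.getElem_inj_iff).mp this
        omega
      · exact h''
  have hall : ∀ b ∈ pre, v < b := by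
    intro b hb
    rw [hpre] at hb
    obtain ⟨k, hk, hbk⟩ := List.mem_iff_getElem.mp hb
    have hk' : k < i := by simp [List.length_take] at hk; omega
    have hbeq : b = x.getD k 0 := by
      rw [← hbk, List.getElem_take, List.getD_eq_getElem]
    rw [hbeq]; exact hmin k hk'
  have hndsplit : (pre ++ v :: suf).Nodup := hsplit ▸ hnd
  have hvpre : v ∉ pre := by
    have hd := List.disjoint_of_nodup_append hndsplit
    exact fun h => hd h (by simp)
  have hvsuf : v ∉ suf := (List.nodup_cons.mp hndsplit.of_append_right).1
  have hprend : pre.Nodup := hndsplit.of_append_left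
  have h1 : sT T x = stkAux T (v :: suf) (run T pre [] []).1 (run T pre [] []).2 := by
    rw [sT]
    conv_lhs => rw [hsplit]
    rw [stkAux_append]
  set st1 := (run T pre [] []).1 with hst1
  set o1 := (run T pre [] []).2 with ho1
  have hperm1 : (o1 ++ st1).Perm pre := by simpa using run_perm T pre [] []
  have hmem1 : ∀ b, b ∈ o1 ∨ b ∈ st1 → b ∈ pre := fun b hb =>
    hperm1.subset (List.mem_append.mpr hb)
  have hnd1 : st1.Nodup := (hperm1.nodup_iff.mpr hprend).of_append_right
  set s2 := (popPhase T v st1).1 with hs2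
  set pp := (popPhase T v st1).2 with hpp
  have hrec : pp ++ s2 = st1 := popPhase_recomb T v st1
  have hsorted : List.Pairwise (· < ·) (v :: s2) := by
    rw [List.pairwise_cons]
    refine ⟨fun b hb => ?_, ?_⟩
    · exact hall b (hmem1 b (Or.inr (by rw [← hrec]; exact List.mem_append_right _ hb)))
    · exact pop_min_sorted v st1 hnd1 (fun b hb => hall b (hmem1 b (Or.inr hb)))
  have h2 : sT T x = stkAux T suf (v :: s2) (o1 ++ pp) := by
    rw [h1, stkAux]
  obtain ⟨w, hw, hwperm⟩ := stkAux_keeps v s2 hsorted suf [] (o1 ++ pp)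
  rw [List.nil_append] at hw
  have hfinal : sT T x = (o1 ++ pp ++ w) ++ v :: s2 := by
    rw [h2, hw]; simp [List.append_assoc]
  have hwsuf : w.Perm suf := by simpa using hwperm
  have hvA : v ∉ o1 ++ pp ++ w := by
    intro hvin
    rcases List.mem_append.mp hvin with hv1 | hv2
    · rcases List.mem_append.mp hv1 with h' | h'
      · exact hvpre (hmem1 v (Or.inl h'))
      · exact hvpre (hmem1 v (Or.inr (by rw [← hrec]; exact List.mem_append_left _ h')))
    · exact hvsuf (hwsuf.subset hv2)
  have huA : u ∈ o1 ++ pp ++ w := List.mem_append.mpr (Or.inr (hwsuf.symm.subset hus))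
  rw [hfinal, List.idxOf_append_of_notMem hvA, indexOf_append_left _ huA] at hleft
  have hlt := List.idxOf_lt_length_iff.mpr huA
  simp [List.idxOf_cons_self, List.append_assoc, List.length_append] at hleft hlt
  omega
end

section
/- If x is sorted by the (132,321)-machine (i.e., s(s_{132,321}(x)) is the identity), then x avoids the pattern 123. -/
-- basic lemmas
lemma isoOrd_lt {p q : List ℕ} (h : isoOrd p q = true) {i j : ℕ}
    (hi : i < p.length) (hj : j < p.length) :
    (p.getD i 0 < p.getD j 0) ↔ (q.getD i 0 < q.getD j 0) := by
  simp only [isoOrd, Bool.and_eq_true, List.all_eq_true, List.mem_range, beq_iff_eq,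
    decide_eq_true_eq] at h
  exact h.2 i hi j hj

lemma containsPat_intro {p w o : List ℕ} (hs : o.Sublist w) (hl : o.length = p.length)
    (hi : isoOrd p o = true) : containsPat p w = true := by
  simp only [containsPat, List.any_eq_true]
  exact ⟨o, List.mem_sublistsLen.2 ⟨hs, hl⟩, hi⟩

lemma containsPat_elim {p w : List ℕ} (h : containsPat p w = true) :
    ∃ o, o.Sublist w ∧ o.length = p.length ∧ isoOrd p o = true := by
  simp only [containsPat, List.any_eq_true] at h
  obtain ⟨o, ho, hi⟩ := h
  exact ⟨o, (List.mem_sublistsLen.1 ho).1, (List.mem_sublistsLen.1 ho).2, hi⟩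

lemma containsPat_mono {p w w' : List ℕ} (hw : w.Sublist w')
    (h : containsPat p w = true) : containsPat p w' = true := by
  obtain ⟨o, ho, hl, hi⟩ := containsPat_elim h
  exact containsPat_intro (ho.trans hw) hl hi

lemma iso231 {m v b : ℕ} (h1 : m < v) (h2 : v < b) : isoOrd [2,3,1] [v,b,m] = true := by
  simp only [isoOrd, List.length_cons]
  simp only [List.length_nil, beq_self_eq_true, Bool.true_and, List.all_eq_true, List.mem_range]
  intro i hi j hj
  interval_cases i <;> interval_cases j <;> simp <;> omega

lemma iso21 {u z : ℕ} (h : z < u) : isoOrd [2,1] [u,z] = true := by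
  simp only [isoOrd, List.length_cons]
  simp only [List.length_nil, beq_self_eq_true, Bool.true_and, List.all_eq_true, List.mem_range]
  intro i hi j hj
  interval_cases i <;> interval_cases j <;> simp <;> omega

lemma iso321 {a v z : ℕ} (h1 : z < v) (h2 : v < a) : isoOrd [3,2,1] [a,v,z] = true := by
  simp only [isoOrd, List.length_cons]
  simp only [List.length_nil, beq_self_eq_true, Bool.true_and, List.all_eq_true, List.mem_range]
  intro i hi j hj
  interval_cases i <;> interval_cases j <;> simp <;> omega

lemma iso132 {a y z : ℕ} (h1 : a < z) (h2 : z < y) : isoOrd [1,3,2] [a,y,z] = true := by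
  simp only [isoOrd, List.length_cons]
  simp only [List.length_nil, beq_self_eq_true, Bool.true_and, List.all_eq_true, List.mem_range]
  intro i hi j hj
  interval_cases i <;> interval_cases j <;> simp <;> omega

lemma popPhase_cons (T : List (List ℕ)) (a b : ℕ) (s : List ℕ) :
    popPhase T a (b :: s) =
      if T.any (fun p => containsPat p (a :: b :: s)) then
        ((popPhase T a s).1, b :: (popPhase T a s).2)
      else (b :: s, []) := by
  rfl

lemma popPhase_eq (T : List (List ℕ)) (a : ℕ) (s : List ℕ) :
    s = (popPhase T a s).2 ++ (popPhase T a s).1 := by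
  induction s with
  | nil => rfl
  | cons b t ih =>
    rw [popPhase_cons]
    split
    · simpa using ih
    · simp

lemma popPhase_suffix (T : List (List ℕ)) (a : ℕ) (s : List ℕ) :
    (popPhase T a s).1 <:+ s := by
  induction s with
  | nil => simp [popPhase]
  | cons b t ih =>
    rw [popPhase_cons]
    split
    · exact ih.trans (List.suffix_cons b t)
    · simp

lemma popPhase_stop (T : List (List ℕ)) (a : ℕ) (s : List ℕ) :
    (popPhase T a s).1 = [] ∨
      T.any (fun p => containsPat p (a :: (popPhase T a s).1)) = false := by
  induction s with
  | nil => simp [popPhase]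
  | cons b t ih =>
    rw [popPhase_cons]
    split
    · simpa using ih
    · rename_i h
      right
      simpa using eq_false_of_ne_true h

/-- If `u < a` is in the stack, the `21`-avoiding stack pops it. -/
lemma pop_out21 {u a : ℕ} {s : List ℕ} (hu : u ∈ s) (hua : u < a) :
    u ∈ (popPhase [[2,1]] a s).2 := by
  induction s with
  | nil => simp at hu
  | cons b t ih =>
    rw [popPhase_cons]
    have hcond : List.any [[2,1]] (fun p => containsPat p (a :: b :: t)) = true := by
      have : containsPat [2,1] (a :: b :: t) = true := by
        refine containsPat_intro (o := [a, u]) ?_ rfl (iso21 hua)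
        exact (List.cons_sublist_cons ..).2 (List.singleton_sublist.2 hu)
      simp [this]
    rw [if_pos hcond]
    rcases List.mem_cons.1 hu with rfl | hu'
    · simp
    · simpa using Or.inr (ih hu')

def T132 : List (List ℕ) := [[1,3,2],[3,2,1]]

/-- If the '2' has something smaller below it, an incoming larger value pops it. -/
lemma pop_out132 {v a z : ℕ} {l1 l2 : List ℕ} (hz : z ∈ l2) (hzv : z < v) (hva : v < a) :
    v ∈ (popPhase T132 a (l1 ++ v :: l2)).2 := by
  induction l1 with
  | nil =>
    rw [List.nil_append, popPhase_cons]
    have hcond : List.any T132 (fun p => containsPat p (a :: v :: l2)) = true := by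
      have : containsPat [3,2,1] (a :: v :: l2) = true := by
        refine containsPat_intro (o := [a, v, z]) ?_ rfl (iso321 hzv hva)
        exact (List.cons_sublist_cons ..).2 ((List.cons_sublist_cons ..).2
          (List.singleton_sublist.2 hz))
      simp [T132, this]
    rw [if_pos hcond]; simp
  | cons b l1' ih =>
    rw [List.cons_append, popPhase_cons]
    have hcond : List.any T132 (fun p => containsPat p (a :: b :: (l1' ++ v :: l2))) = true := by
      have : containsPat [3,2,1] (a :: b :: (l1' ++ v :: l2)) = true := by
        refine containsPat_intro (o := [a, v, z]) ?_ rfl (iso321 hzv hva)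
        refine (List.cons_sublist_cons ..).2 (List.sublist_cons_of_sublist b ?_)
        refine List.sublist_append_of_sublist_right ?_
        exact (List.cons_sublist_cons ..).2 (List.singleton_sublist.2 hz)
      simp [T132, this]
    rw [if_pos hcond]
    simpa using Or.inr ih

lemma iso_false_of_le {p : List ℕ} (hgt : p.getD 2 0 < p.getD 1 0) (hp : p.length = 3)
    {x y z : ℕ} (hyz : y ≤ z) : isoOrd p [x,y,z] ≠ true := by
  intro h
  have h1 := isoOrd_lt h (i := 1) (j := 2) (by omega) (by omega)
  have h2 := isoOrd_lt h (i := 2) (j := 1) (by omega) (by omega)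
  have e1 : [x,y,z].getD 1 0 = y := rfl
  have e2 : [x,y,z].getD 2 0 = z := rfl
  rw [e1, e2] at h1 h2
  omega

lemma noPat_sorted {s : List ℕ} (hs : s.Pairwise (· ≤ ·)) (a : ℕ) :
    List.any T132 (fun p => containsPat p (a :: s)) = false := by
  have key : ∀ p : List ℕ, p.getD 2 0 < p.getD 1 0 → p.length = 3 →
      containsPat p (a :: s) = false := by
    intro p hgt hp
    by_contra hc
    have hc' : containsPat p (a :: s) = true := eq_true_of_ne_false hc
    obtain ⟨o, ho, hl, hi⟩ := containsPat_elim hc'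
    rw [hp] at hl
    obtain ⟨x, y, z, rfl⟩ := List.length_eq_three.1 hl
    have hyz : y ≤ z := by
      rcases List.sublist_cons_iff.1 ho with h | ⟨r, hr, hrs⟩
      · have := List.Pairwise.sublist h hs
        simp only [List.pairwise_cons] at this
        exact this.2.1 z (by simp)
      · have hx : List.Sublist [y, z] s := by
          have : r = [y, z] := by
            injection hr with h1 h2
            exact h2.symm
          rwa [← this]
        have := List.Pairwise.sublist hx hs
        simp only [List.pairwise_cons] at this
        exact this.1 z (by simp)
    exact iso_false_of_le hgt hp hyz hi
  simp only [T132, List.any_cons, List.any_nil, Bool.or_false]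
  rw [key [1,3,2] (by simp) rfl, key [3,2,1] (by simp) rfl]
  rfl

/-- The stack invariant: an increasing suffix containing the overall minimum. -/
def StackInv (st : List ℕ) : Prop :=
  st = [] ∨ ∃ s1 m s2, st = s1 ++ m :: s2 ∧ List.Chain (· ≤ ·) m s2 ∧ ∀ y ∈ st, m ≤ y

/-- The pop phase never eats into the increasing minimal suffix. -/
lemma popPhase_keeps_suffix {s1 s2 : List ℕ} {m a : ℕ}
    (hch : List.Chain (· ≤ ·) m s2) :
    ∃ t, (popPhase T132 a (s1 ++ m :: s2)).1 = t ++ m :: s2 := by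
  induction s1 with
  | nil =>
    rw [List.nil_append, popPhase_cons]
    have hpw : (m :: s2).Pairwise (· ≤ ·) := List.isChain_iff_pairwise.1 hch
    rw [if_neg (by rw [noPat_sorted hpw a]; simp)]
    exact ⟨[], rfl⟩
  | cons b t ih =>
    rw [List.cons_append, popPhase_cons]
    split
    · exact ih
    · exact ⟨b :: t, rfl⟩

lemma mem_of_popPhase1 {a y : ℕ} {st : List ℕ} (T : List (List ℕ))
    (h : y ∈ (popPhase T a st).1) : y ∈ st :=
  (popPhase_suffix T a st).sublist.mem h

/-- The stack invariant is preserved by a pop-then-push step. -/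
lemma stackInv_push {st : List ℕ} (a : ℕ) (h : StackInv st) :
    StackInv (a :: (popPhase T132 a st).1) := by
  rcases h with rfl | ⟨s1, m, s2, rfl, hch, hmin⟩
  · right
    exact ⟨[], a, [], by simp [popPhase], List.Chain.nil, by simp [popPhase]⟩
  · obtain ⟨t, ht⟩ := popPhase_keeps_suffix (s1 := s1) (a := a) hch
    rcases le_or_gt m a with hma | ham
    · right
      refine ⟨a :: t, m, s2, by rw [ht]; rfl, hch, ?_⟩
      intro y hy
      rcases List.mem_cons.1 hy with rfl | hy'
      · exact hma
      · exact hmin y (mem_of_popPhase1 _ (by rw [ht] at hy' ⊢; exact hy'))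
    · -- a is a new minimum; the remaining stack must be sorted
      have hlt : ∀ y ∈ (popPhase T132 a (s1 ++ m :: s2)).1, a < y := by
        intro y hy
        exact lt_of_lt_of_le ham (hmin y (mem_of_popPhase1 _ hy))
      have hpw : ((popPhase T132 a (s1 ++ m :: s2)).1).Pairwise (· ≤ ·) := by
        rcases popPhase_stop T132 a (s1 ++ m :: s2) with hnil | hstop
        · rw [hnil]; exact List.Pairwise.nil
        · rw [List.pairwise_iff_forall_sublist]
          intro y z hsub
          by_contra hyz
          have hzy : z < y := by omega
          have haz : a < z := hlt z (hsub.mem (by simp))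
          have hpat : containsPat [1,3,2]
              (a :: (popPhase T132 a (s1 ++ m :: s2)).1) = true :=
            containsPat_intro ((List.cons_sublist_cons ..).2 hsub) rfl (iso132 haz hzy)
          simp only [T132, List.any_cons, List.any_nil, Bool.or_false, Bool.or_eq_false_iff]
            at hstop
          have h2 := hstop.1
          rw [show ([[1,3,2],[3,2,1]] : List (List ℕ)) = T132 from rfl, hpat] at h2
          simp at h2
      right
      refine ⟨[], a, (popPhase T132 a (s1 ++ m :: s2)).1, rfl, ?_, ?_⟩
      · refine List.isChain_iff_pairwise.2 ?_
        rw [List.pairwise_cons]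
        exact ⟨fun y hy => le_of_lt (hlt y hy), hpw⟩
      · intro y hy
        rcases List.mem_cons.1 hy with rfl | hy'
        · exact le_refl _
        · exact le_of_lt (hlt y hy')

/-- There is a minimal element of the stack surviving any pop phase. -/
lemma min_survives {stack : List ℕ} (b : ℕ) (hinv : StackInv stack) (hne : stack ≠ []) :
    ∃ m, m ∈ (popPhase T132 b stack).1 ∧ ∀ y ∈ stack, m ≤ y := by
  rcases hinv with rfl | ⟨s1, m, s2, rfl, hch, hmin⟩
  · exact absurd rfl hne
  · obtain ⟨t, ht⟩ := popPhase_keeps_suffix (s1 := s1) (a := b) hch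
    exact ⟨m, by rw [ht]; exact List.mem_append_right t (List.mem_cons_self), hmin⟩

/-- Witness: `v` has already been output (with something smaller in the stack),
or is in the stack with something smaller below it. -/
def Wv (out stack : List ℕ) (v : ℕ) : Prop :=
  (v ∈ out ∧ ∃ z ∈ stack, z < v) ∨
  (∃ l1 l2, stack = l1 ++ v :: l2 ∧ ∃ z ∈ l2, z < v)

def Hyp (rest stack out : List ℕ) : Prop :=
  containsPat [2,3,1] (out ++ stack) = true ∨
  (∃ a ∈ rest, ∃ v, v < a ∧ Wv out stack v) ∨
  (∃ l1 v l2 a l3, rest = l1 ++ v :: l2 ++ a :: l3 ∧ v < a ∧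
     ((∃ u ∈ stack, u < v) ∨ (∃ u ∈ l1, u < v)))

lemma stack_ne_of_Wv {out stack : List ℕ} {v : ℕ} (h : Wv out stack v) : stack ≠ [] := by
  rcases h with ⟨_, z, hz, _⟩ | ⟨l1, l2, hst, _⟩
  · intro he; rw [he] at hz; simp at hz
  · intro he; rw [he] at hst; simp at hst

lemma main132 : ∀ rest stack out, StackInv stack → Hyp rest stack out →
    containsPat [2,3,1] (stkAux T132 rest stack out) = true := by
  intro rest
  induction rest with
  | nil =>
    intro stack out _ h
    rcases h with h | ⟨a, ha, _⟩ | ⟨l1, v, l2, a, l3, hr, _⟩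
    · exact h
    · simp at ha
    · exact absurd hr (by simp)
  | cons b rest' ih =>
    intro stack out hinv h
    have hstep : stkAux T132 (b :: rest') stack out =
        stkAux T132 rest' (b :: (popPhase T132 b stack).1)
          (out ++ (popPhase T132 b stack).2) := rfl
    rw [hstep]
    set r1 := (popPhase T132 b stack).1 with hr1
    set r2 := (popPhase T132 b stack).2 with hr2
    have heq : stack = r2 ++ r1 := popPhase_eq T132 b stack
    have hins : (out ++ stack).Sublist ((out ++ r2) ++ (b :: r1)) := by
      rw [heq, List.append_assoc]
      exact List.Sublist.append_left
        (List.Sublist.append_left (List.sublist_cons_self b r1) r2) out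
    refine ih (b :: r1) (out ++ r2) (stackInv_push b hinv) ?_
    rcases h with h | ⟨a, ha, v, hva, hw⟩ | ⟨l1, v, l2, a, l3, hrest, hva, hu⟩
    · exact Or.inl (containsPat_mono hins h)
    · -- WitA
      obtain ⟨m, hm1, hmle⟩ := min_survives b hinv (stack_ne_of_Wv hw)
      rcases List.mem_cons.1 ha with rfl | ha'
      · -- the big element arrives now: produce the 231 occurrence
        left
        have hvout : v ∈ out ++ r2 := by
          rcases hw with ⟨hvo, _⟩ | ⟨l1, l2, hst, z, hz, hzv⟩
          · exact List.mem_append_left _ hvo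
          · exact List.mem_append_right _ (by rw [hr2, hst]; exact pop_out132 hz hzv hva)
        have hmv : m < v := by
          rcases hw with ⟨_, z, hz, hzv⟩ | ⟨l1, l2, hst, z, hz, hzv⟩
          · exact lt_of_le_of_lt (hmle z hz) hzv
          · exact lt_of_le_of_lt (hmle z (by rw [hst]; simp [hz])) hzv
        refine containsPat_intro (o := [v, a, m]) ?_ rfl (iso231 hmv hva)
        refine List.Sublist.append (List.singleton_sublist.2 hvout) ?_
        exact (List.cons_sublist_cons ..).2 (List.singleton_sublist.2 hm1)
      · -- preserve the witness
        refine Or.inr (Or.inl ⟨a, ha', v, hva, ?_⟩)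
        rcases hw with ⟨hvo, z, hz, hzv⟩ | ⟨l1, l2, hst, z, hz, hzv⟩
        · exact Or.inl ⟨List.mem_append_left _ hvo,
            m, List.mem_cons_of_mem b hm1, lt_of_le_of_lt (hmle z hz) hzv⟩
        · have hzst : z ∈ stack := by rw [hst]; simp [hz]
          have hsplit : r2 ++ r1 = l1 ++ v :: l2 := by rw [← heq, hst]
          rcases List.append_eq_append_iff.1 hsplit with ⟨w, hl1, hr1e⟩ | ⟨c, hc1, hc2⟩
          · exact Or.inr ⟨b :: w, l2, by rw [hr1e]; rfl, z, hz, hzv⟩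
          · cases c with
            | nil =>
              simp only [List.nil_append] at hc2
              exact Or.inr ⟨[b], l2, by rw [← hc2]; rfl, z, hz, hzv⟩
            | cons c0 c' =>
              rw [List.cons_append] at hc2
              have hc0 : v = c0 := by injection hc2
              left
              refine ⟨List.mem_append_right _ (by rw [hc1, hc0]; simp), m,
                List.mem_cons_of_mem b hm1, lt_of_le_of_lt (hmle z hzst) hzv⟩
    · -- WitB
      cases l1 with
      | nil =>
        simp only [List.nil_append, List.cons_append] at hrest
        have hbv : b = v := by injection hrest
        have hrest' : rest' = l2 ++ a :: l3 := by injection hrest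
        rcases hu with ⟨u, hu1, hu2⟩ | ⟨u, hu1, _⟩
        · obtain ⟨m, hm1, hmle⟩ := min_survives b hinv (by
            intro he; rw [he] at hu1; simp at hu1)
          refine Or.inr (Or.inl ⟨a, by rw [hrest']; simp, v, hva, Or.inr
            ⟨[], r1, by rw [hbv]; rfl, m, hm1, lt_of_le_of_lt (hmle u hu1) hu2⟩⟩)
        · simp at hu1
      | cons c l1' =>
        rw [List.cons_append, List.cons_append] at hrest
        have hbc : b = c := by injection hrest
        have hrest' : rest' = l1' ++ v :: l2 ++ a :: l3 := by
          injection hrest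
        refine Or.inr (Or.inr ⟨l1', v, l2, a, l3, hrest', hva, ?_⟩)
        rcases hu with ⟨u, hu1, hu2⟩ | ⟨u, hu1, hu2⟩
        · obtain ⟨m, hm1, hmle⟩ := min_survives b hinv (by
            intro he; rw [he] at hu1; simp at hu1)
          exact Or.inl ⟨m, List.mem_cons_of_mem b hm1, lt_of_le_of_lt (hmle u hu1) hu2⟩
        · rcases List.mem_cons.1 hu1 with rfl | hu1'
          · exact Or.inl ⟨u, by rw [hbc]; exact List.mem_cons_self, hu2⟩
          · exact Or.inr ⟨u, hu1', hu2⟩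

def Hyp21 (rest stack out : List ℕ) : Prop :=
  containsPat [2,1] (out ++ stack) = true ∨
  (∃ u ∈ out, ∃ z ∈ rest, z < u) ∨
  (∃ u ∈ stack, ∃ l1 w l2 z l3, rest = l1 ++ w :: l2 ++ z :: l3 ∧ z < u ∧ u < w) ∨
  (∃ l1 u l2 w l3 z l4, rest = l1 ++ u :: l2 ++ w :: l3 ++ z :: l4 ∧ z < u ∧ u < w)

lemma west_main : ∀ rest stack out, Hyp21 rest stack out →
    containsPat [2,1] (stkAux [[2,1]] rest stack out) = true := by
  intro rest
  induction rest with
  | nil =>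
    intro stack out h
    rcases h with h | ⟨u, _, z, hz, _⟩ | ⟨u, _, l1, w, l2, z, l3, hr, _⟩
      | ⟨l1, u, l2, w, l3, z, l4, hr, _⟩
    · exact h
    · simp at hz
    · exact absurd hr (by simp)
    · exact absurd hr (by simp)
  | cons b rest' ih =>
    intro stack out h
    have hstep : stkAux [[2,1]] (b :: rest') stack out =
        stkAux [[2,1]] rest' (b :: (popPhase [[2,1]] b stack).1)
          (out ++ (popPhase [[2,1]] b stack).2) := rfl
    rw [hstep]
    set r1 := (popPhase [[2,1]] b stack).1 with hr1
    set r2 := (popPhase [[2,1]] b stack).2 with hr2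
    have heq : stack = r2 ++ r1 := popPhase_eq _ b stack
    have hins : (out ++ stack).Sublist ((out ++ r2) ++ (b :: r1)) := by
      rw [heq, List.append_assoc]
      exact List.Sublist.append_left
        (List.Sublist.append_left (List.sublist_cons_self b r1) r2) out
    refine ih (b :: r1) (out ++ r2) ?_
    rcases h with h | ⟨u, hu, z, hz, hzu⟩ | ⟨u, hu, l1, w, l2, z, l3, hr, hzu, huw⟩
      | ⟨l1, u, l2, w, l3, z, l4, hr, hzu, huw⟩
    · exact Or.inl (containsPat_mono hins h)
    · rcases List.mem_cons.1 hz with rfl | hz'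
      · left
        refine containsPat_intro (o := [u, z]) ?_ rfl (iso21 hzu)
        exact List.Sublist.append (List.singleton_sublist.2 (List.mem_append_left _ hu))
          (List.singleton_sublist.2 (List.mem_cons_self))
      · exact Or.inr (Or.inl ⟨u, List.mem_append_left _ hu, z, hz', hzu⟩)
    · cases l1 with
      | nil =>
        simp only [List.nil_append, List.cons_append] at hr
        have hbw : b = w := by injection hr
        have hrest' : rest' = l2 ++ z :: l3 := by injection hr
        have hur2 : u ∈ r2 := by
          rw [hr2, hbw]
          exact pop_out21 hu huw
        exact Or.inr (Or.inl ⟨u, List.mem_append_right _ hur2, z,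
          by rw [hrest']; simp, hzu⟩)
      | cons c l1' =>
        rw [List.cons_append, List.cons_append] at hr
        have hrest' : rest' = l1' ++ w :: l2 ++ z :: l3 := by injection hr
        rw [heq] at hu
        rcases List.mem_append.1 hu with hu' | hu'
        · refine Or.inr (Or.inl ⟨u, List.mem_append_right _ hu', z, ?_, hzu⟩)
          rw [hrest']; simp
        · exact Or.inr (Or.inr (Or.inl ⟨u, List.mem_cons_of_mem b hu',
            l1', w, l2, z, l3, hrest', hzu, huw⟩))
    · cases l1 with
      | nil =>
        simp only [List.nil_append, List.cons_append] at hr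
        have hbu : b = u := by injection hr
        have hrest' : rest' = l2 ++ w :: l3 ++ z :: l4 := by injection hr
        exact Or.inr (Or.inr (Or.inl ⟨u, by rw [hbu]; exact List.mem_cons_self,
          l2, w, l3, z, l4, hrest', hzu, huw⟩))
      | cons c l1' =>
        rw [List.cons_append, List.cons_append] at hr
        have hrest' : rest' = l1' ++ u :: l2 ++ w :: l3 ++ z :: l4 := by injection hr
        exact Or.inr (Or.inr (Or.inr ⟨l1', u, l2, w, l3, z, l4, hrest', hzu, huw⟩))

lemma sub3_decomp {u w z : ℕ} {y : List ℕ} (h : List.Sublist [u,w,z] y) :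
    ∃ l1 l2 l3 l4, y = l1 ++ u :: l2 ++ w :: l3 ++ z :: l4 := by
  obtain ⟨A, B, hy, huA, hwz⟩ := List.cons_sublist_iff.1 h
  obtain ⟨C, D, hB, hwC, hz⟩ := List.cons_sublist_iff.1 hwz
  obtain ⟨p, q, hA⟩ := List.append_of_mem huA
  obtain ⟨p2, q2, hC⟩ := List.append_of_mem hwC
  have hzD : z ∈ D := (List.singleton_sublist.1 hz)
  obtain ⟨p3, q3, hD⟩ := List.append_of_mem hzD
  refine ⟨p, q ++ p2, q2 ++ p3, q3, ?_⟩
  rw [hy, hA, hB, hC, hD]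
  simp [List.append_assoc]

lemma iso231_elim {u w z : ℕ} (h : isoOrd [2,3,1] [u,w,z] = true) : z < u ∧ u < w := by
  have h1 := isoOrd_lt h (i := 0) (j := 1) (by simp) (by simp)
  have h2 := isoOrd_lt h (i := 2) (j := 0) (by simp) (by simp)
  have e0 : ([2,3,1] : List ℕ).getD 0 0 = 2 := rfl
  have e1 : ([2,3,1] : List ℕ).getD 1 0 = 3 := rfl
  have e2 : ([2,3,1] : List ℕ).getD 2 0 = 1 := rfl
  have f0 : ([u,w,z] : List ℕ).getD 0 0 = u := rfl
  have f1 : ([u,w,z] : List ℕ).getD 1 0 = w := rfl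
  have f2 : ([u,w,z] : List ℕ).getD 2 0 = z := rfl
  rw [e0, e1, f0, f1] at h1
  rw [e2, e0, f2, f0] at h2
  omega

lemma iso123_elim {u w z : ℕ} (h : isoOrd [1,2,3] [u,w,z] = true) : u < w ∧ w < z := by
  have h1 := isoOrd_lt h (i := 0) (j := 1) (by simp) (by simp)
  have h2 := isoOrd_lt h (i := 1) (j := 2) (by simp) (by simp)
  have e0 : ([1,2,3] : List ℕ).getD 0 0 = 1 := rfl
  have e1 : ([1,2,3] : List ℕ).getD 1 0 = 2 := rfl
  have e2 : ([1,2,3] : List ℕ).getD 2 0 = 3 := rfl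
  have f0 : ([u,w,z] : List ℕ).getD 0 0 = u := rfl
  have f1 : ([u,w,z] : List ℕ).getD 1 0 = w := rfl
  have f2 : ([u,w,z] : List ℕ).getD 2 0 = z := rfl
  rw [e0, e1, f0, f1] at h1
  rw [e1, e2, f1, f2] at h2
  omega

lemma contains21_idPerm (n : ℕ) : containsPat [2,1] (idPerm n) = false := by
  by_contra hc
  have hc' : containsPat [2,1] (idPerm n) = true := eq_true_of_ne_false hc
  obtain ⟨o, ho, hl, hi⟩ := containsPat_elim hc'
  obtain ⟨p, q, rfl⟩ := List.length_eq_two.1 hl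
  have hpq : p < q := by
    have hpw : (idPerm n).Pairwise (· < ·) := List.pairwise_lt_range' (s := 1) (n := n)
    have := List.Pairwise.sublist ho hpw
    simp only [List.pairwise_cons] at this
    exact this.1 q (by simp)
  have h1 := isoOrd_lt hi (i := 0) (j := 1) (by simp) (by simp)
  have e0 : ([2,1] : List ℕ).getD 0 0 = 2 := rfl
  have e1 : ([2,1] : List ℕ).getD 1 0 = 1 := rfl
  have f0 : ([p,q] : List ℕ).getD 0 0 = p := rfl
  have f1 : ([p,q] : List ℕ).getD 1 0 = q := rfl
  rw [e0, e1, f0, f1] at h1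
  omega

theorem sortable_avoids_123' (n : ℕ) (x : List ℕ)
    (hs : westSort (sT [[1,3,2],[3,2,1]] x) = idPerm n) :
    containsPat [1,2,3] x = false := by
  by_contra hc
  have hc' : containsPat [1,2,3] x = true := eq_true_of_ne_false hc
  obtain ⟨o, ho, hl, hi⟩ := containsPat_elim hc'
  obtain ⟨u, v, a, rfl⟩ := List.length_eq_three.1 hl
  obtain ⟨huv, hva⟩ := iso123_elim hi
  obtain ⟨l1, l2, l3, l4, hx⟩ := sub3_decomp ho
  -- the (132,321)-stack output contains 231
  have h231 : containsPat [2,3,1] (sT [[1,3,2],[3,2,1]] x) = true := by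
    have hhyp : Hyp x [] [] := by
      refine Or.inr (Or.inr ⟨l1 ++ u :: l2, v, l3, a, l4, ?_, hva,
        Or.inr ⟨u, by simp, huv⟩⟩)
      rw [hx]
    have := main132 x [] [] (Or.inl rfl) hhyp
    exact this
  -- hence West's stack output contains 21
  have h21 : containsPat [2,1] (westSort (sT [[1,3,2],[3,2,1]] x)) = true := by
    obtain ⟨o2, ho2, hl2, hi2⟩ := containsPat_elim h231
    obtain ⟨u2, w2, z2, rfl⟩ := List.length_eq_three.1 hl2
    obtain ⟨hzu, huw⟩ := iso231_elim hi2
    obtain ⟨m1, m2, m3, m4, hy⟩ := sub3_decomp ho2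
    have hhyp : Hyp21 (sT [[1,3,2],[3,2,1]] x) [] [] :=
      Or.inr (Or.inr (Or.inr ⟨m1, u2, m2, w2, m3, z2, m4, hy, hzu, huw⟩))
    exact west_main _ [] [] hhyp
  rw [hs] at h21
  rw [contains21_idPerm] at h21
  exact Bool.false_ne_true h21

/-- A `(132,321)`-sortable permutation avoids `123`. -/
theorem sortable_avoids_123 (n : ℕ) (x : List ℕ) (hx : IsPermList n x)
    (hs : westSort (sT [[1,3,2],[3,2,1]] x) = idPerm n) :
    containsPat [1,2,3] x = false := sortable_avoids_123' n x hs
end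

section
/- If a permutation x avoids the pattern 123 and avoids the bivincular pattern 132* (no i < j with x_i < x_{j+1} and x_j = x_{j+1}+1), then x is sorted by the (132,321)-machine. -/
-- characterization of isoOrd on 3-element lists
lemma iso132_s5 (c d e : ℕ) : isoOrd [1,3,2] [c,d,e] = true ↔ (c < e ∧ e < d) := by
  simp [isoOrd, List.all_eq_true, List.mem_range]
  constructor
  · intro h
    have h1 := h 0 (by norm_num) 2 (by norm_num)
    have h2 := h 2 (by norm_num) 1 (by norm_num)
    simp at h1 h2
    omega
  · intro h i hi j hj
    interval_cases i <;> interval_cases j <;> simp <;> omega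

lemma iso321_s5 (c d e : ℕ) : isoOrd [3,2,1] [c,d,e] = true ↔ (e < d ∧ d < c) := by
  simp [isoOrd, List.all_eq_true, List.mem_range]
  constructor
  · intro h
    have h1 := h 2 (by norm_num) 1 (by norm_num)
    have h2 := h 1 (by norm_num) 0 (by norm_num)
    simp at h1 h2
    omega
  · intro h i hi j hj
    interval_cases i <;> interval_cases j <;> simp <;> omega

lemma iso123 (c d e : ℕ) : isoOrd [1,2,3] [c,d,e] = true ↔ (c < d ∧ d < e) := by
  simp [isoOrd, List.all_eq_true, List.mem_range]
  constructor
  · intro h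
    have h1 := h 0 (by norm_num) 1 (by norm_num)
    have h2 := h 1 (by norm_num) 2 (by norm_num)
    simp at h1 h2
    omega
  · intro h i hi j hj
    interval_cases i <;> interval_cases j <;> simp <;> omega

lemma iso21_s5 (c d : ℕ) : isoOrd [2,1] [c,d] = true ↔ d < c := by
  simp [isoOrd, List.all_eq_true, List.mem_range]
  constructor
  · intro h
    have h1 := h 1 (by norm_num) 0 (by norm_num)
    simp at h1
    omega
  · intro h i hi j hj
    interval_cases i <;> interval_cases j <;> simp <;> omega

lemma len3 {l : List ℕ} (h : l.length = 3) : ∃ c d e, l = [c,d,e] := by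
  match l, h with
  | [c,d,e], _ => exact ⟨c,d,e,rfl⟩

lemma len2 {l : List ℕ} (h : l.length = 2) : ∃ c d, l = [c,d] := by
  match l, h with
  | [c,d], _ => exact ⟨c,d,rfl⟩

lemma contains3_iff (P w : List ℕ) (hP : P.length = 3) :
    containsPat P w = true ↔ ∃ c d e, List.Sublist [c,d,e] w ∧ isoOrd P [c,d,e] = true := by
  rw [containsPat, hP, List.any_eq_true]
  constructor
  · rintro ⟨l, hl, hiso⟩
    rw [List.mem_sublistsLen] at hl
    obtain ⟨c,d,e,rfl⟩ := len3 hl.2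
    exact ⟨c,d,e,hl.1,hiso⟩
  · rintro ⟨c,d,e,hsub,hiso⟩
    exact ⟨[c,d,e], List.mem_sublistsLen.mpr ⟨hsub, rfl⟩, hiso⟩

lemma contains2_iff (P w : List ℕ) (hP : P.length = 2) :
    containsPat P w = true ↔ ∃ c d, List.Sublist [c,d] w ∧ isoOrd P [c,d] = true := by
  rw [containsPat, hP, List.any_eq_true]
  constructor
  · rintro ⟨l, hl, hiso⟩
    rw [List.mem_sublistsLen] at hl
    obtain ⟨c,d,rfl⟩ := len2 hl.2
    exact ⟨c,d,hl.1,hiso⟩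
  · rintro ⟨c,d,hsub,hiso⟩
    exact ⟨[c,d], List.mem_sublistsLen.mpr ⟨hsub, rfl⟩, hiso⟩

lemma contains21_iff_s5 (w : List ℕ) :
    containsPat [2,1] w = true ↔ ∃ c d, List.Sublist [c,d] w ∧ d < c := by
  rw [contains2_iff _ _ (by rfl)]
  simp only [iso21_s5]

lemma contains123_iff (w : List ℕ) :
    containsPat [1,2,3] w = true ↔ ∃ c d e, List.Sublist [c,d,e] w ∧ c < d ∧ d < e := by
  rw [contains3_iff _ _ (by rfl)]
  simp only [iso123]

abbrev T1 : List (List ℕ) := [[1,3,2],[3,2,1]]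
abbrev T2 : List (List ℕ) := [[2,1]]

lemma T1_any_iff (w : List ℕ) : (T1.any fun p => containsPat p w) = true ↔
    ∃ c d e, List.Sublist [c,d,e] w ∧ ((c < e ∧ e < d) ∨ (e < d ∧ d < c)) := by
  simp only [T1, List.any_cons, List.any_nil, Bool.or_false, Bool.or_eq_true]
  rw [contains3_iff _ _ (by rfl), contains3_iff _ _ (by rfl)]
  simp only [iso132_s5, iso321_s5]
  constructor
  · rintro (⟨c,d,e,h,hv⟩|⟨c,d,e,h,hv⟩) <;> exact ⟨c,d,e,h, by tauto⟩
  · rintro ⟨c,d,e,h,hv|hv⟩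
    · exact Or.inl ⟨c,d,e,h,hv⟩
    · exact Or.inr ⟨c,d,e,h,hv⟩

lemma T2_any_iff (w : List ℕ) : (T2.any fun p => containsPat p w) = true ↔
    ∃ c d, List.Sublist [c,d] w ∧ d < c := by
  simp only [T2, List.any_cons, List.any_nil, Bool.or_false]
  exact contains21_iff_s5 w

lemma pair_of_sorted {c d : ℕ} {w : List ℕ} (hw : w.Pairwise (· < ·))
    (h : List.Sublist [c,d] w) : c < d := by
  have := List.Pairwise.sublist h hw
  rw [List.pairwise_cons] at this
  exact this.1 d (by simp)

lemma triple_of_sorted {c d e : ℕ} {w : List ℕ} (hw : w.Pairwise (· < ·))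
    (h : List.Sublist [c,d,e] w) : c < d ∧ d < e := by
  have h2 := List.Pairwise.sublist h hw
  rw [List.pairwise_cons] at h2
  exact ⟨h2.1 d (by simp), (List.pairwise_cons.mp h2.2).1 e (by simp)⟩

lemma T1_none_sorted {b : ℕ} {s : List ℕ} (hs : s.Pairwise (· < ·)) :
    (T1.any fun p => containsPat p (b::s)) = false := by
  by_contra h
  rw [← ne_eq, Bool.ne_false_iff, T1_any_iff] at h
  obtain ⟨c,d,e,hsub,hv⟩ := h
  rcases List.sublist_cons_iff.mp hsub with h1 | ⟨r, hr, h1⟩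
  · have := triple_of_sorted hs h1; omega
  · obtain ⟨rfl⟩ : r = [d,e] := by cases hr; rfl
    have hde := pair_of_sorted hs h1
    have : c = b := by cases hr; rfl
    omega

lemma T1_extract {b a : ℕ} {s : List ℕ} (hs : s.Pairwise (· < ·))
    (h : (T1.any fun p => containsPat p (b::a::s)) = true) :
    ∃ e ∈ s, (b < e ∧ e < a) ∨ (a < b ∧ e < a) := by
  rw [T1_any_iff] at h
  obtain ⟨c,d,e,hsub,hv⟩ := h
  rcases List.sublist_cons_iff.mp hsub with h1 | ⟨r, hr, h1⟩
  · -- [c,d,e] <+ a::s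
    rcases List.sublist_cons_iff.mp h1 with h2 | ⟨r2, hr2, h2⟩
    · have := triple_of_sorted hs h2; omega
    · have hc : c = a ∧ r2 = [d,e] := by cases hr2; exact ⟨rfl, rfl⟩
      obtain ⟨rfl, rfl⟩ := hc
      have := pair_of_sorted hs h2; omega
  · have hc : c = b ∧ r = [d,e] := by cases hr; exact ⟨rfl, rfl⟩
    obtain ⟨rfl, rfl⟩ := hc
    rcases List.sublist_cons_iff.mp h1 with h2 | ⟨r2, hr2, h2⟩
    · have := pair_of_sorted hs h2; omega
    · have hd : d = a ∧ r2 = [e] := by cases hr2; exact ⟨rfl, rfl⟩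
      obtain ⟨rfl, rfl⟩ := hd
      have he : e ∈ s := List.singleton_sublist.mp h2
      exact ⟨e, he, by omega⟩

lemma T1_fire132 {b a e : ℕ} {s : List ℕ} (he : e ∈ s) (h1 : b < e) (h2 : e < a) :
    (T1.any fun p => containsPat p (b::a::s)) = true := by
  rw [T1_any_iff]
  exact ⟨b, a, e, (List.cons_sublist_cons.mpr (List.cons_sublist_cons.mpr
    (List.singleton_sublist.mpr he))), Or.inl ⟨h1, h2⟩⟩

lemma T2_none_sorted {w : List ℕ} (hw : w.Pairwise (· < ·)) :
    (T2.any fun p => containsPat p w) = false := by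
  by_contra h
  rw [← ne_eq, Bool.ne_false_iff, T2_any_iff] at h
  obtain ⟨c,d,hsub,hv⟩ := h
  have := pair_of_sorted hw hsub; omega

lemma popPhase_pos {T : List (List ℕ)} {a b : ℕ} {s : List ℕ}
    (h : (T.any fun p => containsPat p (a::b::s)) = true) :
    popPhase T a (b::s) = ((popPhase T a s).1, b::(popPhase T a s).2) := by
  simp [popPhase, h]

lemma popPhase_neg {T : List (List ℕ)} {a b : ℕ} {s : List ℕ}
    (h : (T.any fun p => containsPat p (a::b::s)) = false) :
    popPhase T a (b::s) = (b::s, []) := by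
  simp [popPhase, h]

lemma popPhase_perm (T : List (List ℕ)) (a : ℕ) : ∀ s : List ℕ,
    ((popPhase T a s).2 ++ (popPhase T a s).1).Perm s := by
  intro s
  induction s with
  | nil => simp [popPhase]
  | cons b t ih =>
    by_cases h : (T.any fun p => containsPat p (a::b::t)) = true
    · rw [popPhase_pos h]
      simpa using ih.cons b
    · rw [popPhase_neg (by simpa using h)]
      simp

lemma stkAux_perm (T : List (List ℕ)) : ∀ (rest stack out : List ℕ),
    (stkAux T rest stack out).Perm (out ++ stack ++ rest) := by
  intro rest
  induction rest with
  | nil => intro stack out; simp [stkAux]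
  | cons a rest ih =>
    intro stack out
    rw [stkAux]
    refine (ih _ _).trans ?_
    have hp := popPhase_perm T a stack
    rw [← Multiset.coe_eq_coe] at hp ⊢
    simp only [← Multiset.coe_add, ← Multiset.cons_coe, ← Multiset.singleton_add] at hp ⊢
    rw [← hp]
    abel

lemma mem_dropWhile_ge {b z : ℕ} : ∀ {st : List ℕ}, st.Pairwise (· < ·) →
    z ∈ st.dropWhile (· < b) → ¬ z < b := by
  intro st
  induction st with
  | nil => intro _ h; simp [List.dropWhile] at h
  | cons h t ih =>
    intro hs hz
    by_cases hb : h < b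
    · rw [List.dropWhile_cons_of_pos (by simpa using hb)] at hz
      exact ih (List.pairwise_cons.mp hs).2 hz
    · rw [List.dropWhile_cons_of_neg (by simpa using hb)] at hz
      rcases List.mem_cons.mp hz with rfl | hz
      · exact hb
      · have := (List.pairwise_cons.mp hs).1 z hz; omega

lemma pop21_sorted {b : ℕ} : ∀ {st : List ℕ}, st.Pairwise (· < ·) → b ∉ st →
    popPhase T2 b st = (st.dropWhile (· < b), st.takeWhile (· < b)) := by
  intro st
  induction st with
  | nil => intro _ _; simp [popPhase]
  | cons h t ih =>
    intro hs hb
    by_cases hhb : h < b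
    · have fire : (T2.any fun p => containsPat p (b::h::t)) = true := by
        rw [T2_any_iff]
        exact ⟨b, h, List.cons_sublist_cons.mpr (List.cons_sublist_cons.mpr
          (List.nil_sublist _)), hhb⟩
      rw [popPhase_pos fire, ih (List.pairwise_cons.mp hs).2 (fun hm => hb (List.mem_cons_of_mem _ hm)),
        List.dropWhile_cons_of_pos (by simpa using hhb),
        List.takeWhile_cons_of_pos (by simpa using hhb)]
    · have hbh : b < h := by
        have : b ≠ h := fun he => hb (he ▸ List.mem_cons_self)
        omega
      have hsort : (b::h::t).Pairwise (· < ·) := by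
        rw [List.pairwise_cons]
        refine ⟨fun z hz => ?_, hs⟩
        rcases List.mem_cons.mp hz with rfl | hz
        · exact hbh
        · have := (List.pairwise_cons.mp hs).1 z hz; omega
      rw [popPhase_neg (T2_none_sorted hsort),
        List.dropWhile_cons_of_neg (by simpa using hhb),
        List.takeWhile_cons_of_neg (by simpa using hhb)]

lemma pop21_none {e : ℕ} {st : List ℕ} (hs : st.Pairwise (· < ·))
    (hlt : ∀ f ∈ st, e < f) : popPhase T2 e st = (st, []) := by
  cases st with
  | nil => simp [popPhase]
  | cons h t =>
    refine popPhase_neg (T2_none_sorted ?_)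
    rw [List.pairwise_cons]
    exact ⟨fun z hz => hlt z hz, hs⟩

lemma west_inc : ∀ (rest st out : List ℕ), rest.Pairwise (· < ·) → st.Pairwise (· < ·) →
    out.Pairwise (· < ·) →
    (∀ o ∈ out, ∀ z ∈ st ++ rest, o < z) → (st ++ rest).Nodup →
    (stkAux T2 rest st out).Pairwise (· < ·) := by
  intro rest
  induction rest with
  | nil =>
    intro st out _ hst hout hcross _
    rw [stkAux, List.pairwise_append]
    exact ⟨hout, hst, fun a ha b hb => hcross a ha b (by simpa using hb)⟩
  | cons b rest' ih =>
    intro st out hrest hst hout hcross hnd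
    have hdisj : st.Disjoint (b::rest') := List.disjoint_of_nodup_append hnd
    have hbst : b ∉ st := fun hm => hdisj hm (List.mem_cons_self)
    rw [stkAux, pop21_sorted hst hbst]
    set tk := st.takeWhile (· < b) with htk
    set dr := st.dropWhile (· < b) with hdr
    have htkdr : tk ++ dr = st := List.takeWhile_append_dropWhile
    have htksub : ∀ z ∈ tk, z ∈ st := fun z hz => htkdr ▸ List.mem_append_left _ hz
    have hdrsub : ∀ z ∈ dr, z ∈ st := fun z hz => htkdr ▸ List.mem_append_right _ hz
    have hrest' := (List.pairwise_cons.mp hrest)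
    have hbdr : ∀ z ∈ dr, b < z := by
      intro z hz
      have h1 := mem_dropWhile_ge hst hz
      have h2 : z ≠ b := fun he => hbst (he ▸ hdrsub z hz)
      omega
    have htklt : ∀ o ∈ tk, o < b := fun o ho => by simpa using List.mem_takeWhile_imp ho
    have hstpw : List.Pairwise (· < ·) (tk ++ dr) := htkdr ▸ hst
    have htd := (List.pairwise_append.mp hstpw).2.2
    simp only []
    apply ih
    · exact hrest'.2
    · rw [List.pairwise_cons]
      exact ⟨hbdr, List.Pairwise.sublist (List.dropWhile_sublist _) hst⟩
    · rw [List.pairwise_append]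
      refine ⟨hout, List.Pairwise.sublist (List.takeWhile_sublist _) hst, ?_⟩
      intro o ho z hz
      exact hcross o ho z (List.mem_append_left _ (htksub z hz))
    · intro o ho z hz
      rcases List.mem_append.mp ho with ho1 | ho1
      · rcases List.mem_append.mp hz with hz1 | hz1
        · rcases List.mem_cons.mp hz1 with rfl | hz2
          · exact hcross o ho1 z (List.mem_append_right _ (List.mem_cons_self))
          · exact hcross o ho1 z (List.mem_append_left _ (hdrsub z hz2))
        · exact hcross o ho1 z (List.mem_append_right _ (List.mem_cons_of_mem _ hz1))
      · have hob : o < b := htklt o ho1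
        rcases List.mem_append.mp hz with hz1 | hz1
        · rcases List.mem_cons.mp hz1 with rfl | hz2
          · exact hob
          · exact htd o ho1 z hz2
        · have := hrest'.1 z hz1; omega
    · have h1 : ((tk ++ dr) ++ b :: rest').Nodup := htkdr.symm ▸ hnd
      rw [List.append_assoc] at h1
      have h2 : (dr ++ b :: rest').Nodup := h1.of_append_right
      have h3 : (dr ++ b :: rest').Perm (b :: (dr ++ rest')) := List.perm_middle
      have := h3.nodup h2
      simpa using this

lemma west_main_s5 : ∀ (u v st out : List ℕ), u.Pairwise (· > ·) → v.Pairwise (· < ·) →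
    st.Pairwise (· < ·) → out.Pairwise (· < ·) →
    (∀ e ∈ u, ∀ f ∈ st, e < f) →
    (∀ o ∈ out, ∀ z ∈ st ++ u ++ v, o < z) →
    (st ++ u ++ v).Nodup →
    (stkAux T2 (u ++ v) st out).Pairwise (· < ·) := by
  intro u
  induction u with
  | nil =>
    intro v st out _ hv hst hout _ hcross hnd
    rw [List.nil_append]
    refine west_inc v st out hv hst hout ?_ ?_
    · intro o ho z hz; exact hcross o ho z (by simpa using hz)
    · simpa using hnd
  | cons e u' ih =>
    intro v st out hu hv hst hout hefst hcross hnd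
    have hu' := List.pairwise_cons.mp hu
    have hest : ∀ f ∈ st, e < f := fun f hf => hefst e (List.mem_cons_self) f hf
    rw [List.cons_append, stkAux, pop21_none hst hest]
    simp only [List.append_nil]
    refine ih v (e::st) out hu'.2 hv ?_ hout ?_ ?_ ?_
    · rw [List.pairwise_cons]; exact ⟨hest, hst⟩
    · intro e' he' f hf
      rcases List.mem_cons.mp hf with rfl | hf1
      · exact hu'.1 e' he'
      · have h1 := hu'.1 e' he'; have h2 := hest f hf1; omega
    · intro o ho z hz
      apply hcross o ho
      simp only [List.mem_append, List.mem_cons] at hz ⊢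
      tauto
    · have h1 : (st ++ e :: (u' ++ v)).Nodup := by simpa using hnd
      have h2 := (List.perm_middle (l₁ := st) (a := e) (l₂ := u'++v)).nodup h1
      simpa using h2

lemma west_eq {n : ℕ} {y u v : List ℕ} (hy : y = u ++ v) (hu : u.Pairwise (· > ·))
    (hv : v.Pairwise (· < ·)) (hperm : y.Perm (List.range' 1 n)) :
    westSort y = List.range' 1 n := by
  have hnd : y.Nodup := hperm.symm.nodup (List.nodup_range' (s := 1) (n := n))
  have hsorted : (westSort y).Pairwise (· < ·) := by
    subst hy
    have := west_main_s5 u v [] [] hu hv (by simp) (by simp) (by simp) (by simp)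
      (by simp only [List.nil_append]; exact hnd)
    simpa [westSort, sT] using this
  have hpermw : (westSort y).Perm y := by
    have := stkAux_perm T2 y [] []
    simpa [westSort, sT] using this
  have hr : (List.range' 1 n).Pairwise (· ≤ ·) :=
    List.Pairwise.imp (fun h => le_of_lt h) (List.pairwise_lt_range' (s := 1) (n := n))
  exact List.Perm.eq_of_pairwise'
    (List.Pairwise.imp (fun h => le_of_lt h) hsorted) hr (hpermw.trans hperm)

lemma perm_juggle1 (out s rest' : List ℕ) (a b : ℕ) :
    (out ++ (b::a::s) ++ rest').Perm (out ++ (a::s) ++ (b::rest')) := by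
  rw [← Multiset.coe_eq_coe]
  simp only [← Multiset.coe_add, ← Multiset.cons_coe, ← Multiset.singleton_add]
  abel

lemma perm_juggle2 (out s rest' : List ℕ) (a b : ℕ) :
    ((out ++ [a]) ++ (b::s) ++ rest').Perm (out ++ (a::s) ++ (b::rest')) := by
  rw [← Multiset.coe_eq_coe]
  simp only [← Multiset.coe_add, ← Multiset.cons_coe, ← Multiset.singleton_add]
  abel

lemma main_inv (x : List ℕ) (hnd : x.Nodup)
    (h123 : containsPat [1,2,3] x = false) (hstar : ¬ Has132Star x)
    (hval : ∀ a ∈ x, ∀ c : ℕ, 1 ≤ c → c ≤ a → c ∈ x) :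
    ∀ (rest q : List ℕ) (a : ℕ) (s out : List ℕ),
      x = q ++ a :: rest →
      s.Pairwise (· < ·) →
      out.Pairwise (· > ·) →
      (∀ o ∈ out, ∀ r ∈ rest, r < o) →
      (∀ o ∈ out, a < o) →
      List.Sublist s.reverse q →
      (out ++ (a :: s) ++ rest).Perm x →
      ∃ u v, stkAux T1 rest (a :: s) out = u ++ v ∧ u.Pairwise (· > ·) ∧ v.Pairwise (· < ·) := by
  have h123' : ∀ c d e : ℕ, List.Sublist [c,d,e] x → c < d → d < e → False := by
    intro c d e hsub hcd hde
    have : containsPat [1,2,3] x = true := (contains123_iff x).mpr ⟨c,d,e,hsub,hcd,hde⟩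
    rw [h123] at this
    exact absurd this (by simp)
  intro rest
  induction rest with
  | nil =>
    intro q a s out heq hs hout houtrest houta hsubq hperm
    rw [stkAux]
    cases s with
    | nil =>
      refine ⟨out ++ [a], [], by simp, ?_, by simp⟩
      rw [List.pairwise_append]
      exact ⟨hout, by simp, by simpa using houta⟩
    | cons s1 s' =>
      have hnd2 : (q ++ a :: ([] : List ℕ)).Nodup := heq ▸ hnd
      have haq : a ∉ q := by
        rw [List.nodup_append] at hnd2
        exact fun hm => hnd2.2.2 a hm a (by simp) rfl
      have hs1q : s1 ∈ q := hsubq.subset (by simp)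
      have hne : s1 ≠ a := fun he => haq (he ▸ hs1q)
      by_cases hlt : a < s1
      · refine ⟨out ++ [a], s1 :: s', by simp, ?_, hs⟩
        rw [List.pairwise_append]
        exact ⟨hout, by simp, by simpa using houta⟩
      · have hgt : s1 < a := by omega
        refine ⟨out ++ [a, s1], s', by simp, ?_, (List.pairwise_cons.mp hs).2⟩
        rw [List.pairwise_append]
        refine ⟨hout, ?_, ?_⟩
        · simp [hgt]
        · intro o ho z hz
          have hoa := houta o ho
          rcases List.mem_cons.mp hz with rfl | hz1
          · exact hoa
          · have : z = s1 := by simpa using hz1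
            omega
  | cons b rest' ih =>
    intro q a s out heq hs hout houtrest houta hsubq hperm
    have hnd2 : (q ++ a :: b :: rest').Nodup := heq ▸ hnd
    have hdisj : q.Disjoint (a :: b :: rest') := List.disjoint_of_nodup_append hnd2
    have hndr : (a :: b :: rest').Nodup := (List.nodup_append.mp hnd2).2.1
    have haq : a ∉ q := fun hm => hdisj hm (by simp)
    have hbq : b ∉ q := fun hm => hdisj hm (by simp)
    have hba : b ≠ a := by
      have h1 := (List.nodup_cons.mp hndr).1
      intro h; exact h1 (by simp [← h])
    have hra : ∀ r ∈ rest', r ≠ a := by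
      intro r hr h
      exact (List.nodup_cons.mp hndr).1 (h ▸ by simp [hr])
    have hsq : ∀ z ∈ s, z ∈ q := fun z hz => hsubq.subset (List.mem_reverse.mpr hz)
    have hax : a ∈ x := by rw [heq]; simp
    have sub1 : ∀ e ∈ q, List.Sublist [e, a, b] x := by
      intro e he; rw [heq]
      exact List.Sublist.append (List.singleton_sublist.mpr he)
        (List.cons_sublist_cons.mpr (List.cons_sublist_cons.mpr (List.nil_sublist _)))
    have sub2 : ∀ e ∈ q, ∀ c ∈ rest', List.Sublist [e, b, c] x := by
      intro e he c hc; rw [heq]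
      refine List.Sublist.append (List.singleton_sublist.mpr he) ?_
      exact List.Sublist.cons _ (List.cons_sublist_cons.mpr (List.singleton_sublist.mpr hc))
    have sub3 : ∀ e ∈ q, ∀ r ∈ rest', List.Sublist [e, a, r] x := by
      intro e he r hr; rw [heq]
      refine List.Sublist.append (List.singleton_sublist.mpr he) ?_
      exact List.cons_sublist_cons.mpr (List.Sublist.cons _ (List.singleton_sublist.mpr hr))
    rw [stkAux]
    by_cases hP : (T1.any fun p => containsPat p (b :: a :: s)) = true
    · obtain ⟨e, hes, hcase⟩ := T1_extract hs hP
      have heqq : e ∈ q := hsq e hes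
      rcases hcase with ⟨hbe, hea⟩ | ⟨hab, hea⟩
      swap
      · exact (h123' e a b (sub1 e heqq) hea hab).elim
      · have hbalt : b < a := lt_trans hbe hea
        have hpop2 : popPhase T1 b s = (s, []) := by
          cases s with
          | nil => simp [popPhase]
          | cons s1 s'' => exact popPhase_neg (T1_none_sorted hs)
        rw [popPhase_pos hP, hpop2]
        simp only [List.cons_append, List.nil_append]
        have hrlta : ∀ r ∈ rest', r < a := by
          intro r hr
          have h1 : r ≠ a := hra r hr
          by_contra hcon
          push_neg at hcon
          exact h123' e a r (sub3 e heqq r hr) hea (by omega)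
        refine ih (q ++ [a]) b s (out ++ [a]) ?_ hs ?_ ?_ ?_ ?_ ?_
        · rw [heq]; simp
        · rw [List.pairwise_append]
          exact ⟨hout, by simp, by simpa using houta⟩
        · intro o ho r hr
          rcases List.mem_append.mp ho with ho1 | ho1
          · exact houtrest o ho1 r (by simp [hr])
          · have hoa : o = a := by simpa using ho1
            exact hoa ▸ hrlta r hr
        · intro o ho
          rcases List.mem_append.mp ho with ho1 | ho1
          · exact houtrest o ho1 b (by simp)
          · have hoa : o = a := by simpa using ho1
            omega
        · exact hsubq.trans (List.sublist_append_left q [a])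
        · exact (perm_juggle2 out s rest' a b).trans hperm
    · rw [popPhase_neg (by simpa using hP)]
      simp only [List.append_nil]
      have hsa : ∀ z ∈ s, a < z := by
        intro z hz
        have hzq : z ∈ q := hsq z hz
        have hza : z ≠ a := fun h => haq (h ▸ hzq)
        by_contra hcon
        push_neg at hcon
        have hzlta : z < a := by omega
        have hzb : z ≠ b := fun h => hbq (h ▸ hzq)
        rcases lt_or_gt_of_ne hzb with hzb1 | hzb1
        · rcases lt_or_gt_of_ne hba with hba1 | hba1
          · by_cases hone : a = b + 1
            · apply hstar
              obtain ⟨i, hi, hqi⟩ := List.mem_iff_getElem.mp hzq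
              have hjlen : q.length + 1 < x.length := by
                rw [heq]; simp
              have hgj : x.getD q.length 0 = a := by
                rw [heq, List.getD_eq_getElem _ _ (by simp),
                  List.getElem_append_right (le_refl _)]
                simp
              have hgj1 : x.getD (q.length + 1) 0 = b := by
                rw [heq, List.getD_eq_getElem _ _ (by simpa using hjlen),
                  List.getElem_append_right (by omega)]
                simp
              have hgi : x.getD i 0 = z := by
                rw [heq, List.getD_eq_getElem _ _ (by simp; omega),
                  List.getElem_append_left hi]
                exact hqi
              exact ⟨i, q.length, by omega, hjlen, by rw [hgi, hgj1]; omega,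
                by rw [hgj, hgj1]; omega⟩
            · have hgap : b + 1 < a := by omega
              have hcx : (b + 1) ∈ x := hval a hax (b + 1) (by omega) (by omega)
              have hcmem : (b + 1) ∈ out ++ (a :: s) ++ (b :: rest') :=
                hperm.mem_iff.mpr hcx
              rcases List.mem_append.mp hcmem with hc1 | hc1
              · rcases List.mem_append.mp hc1 with hc2 | hc2
                · have := houta _ hc2; omega
                · rcases List.mem_cons.mp hc2 with hc3 | hc3
                  · omega
                  · exact hP (T1_fire132 hc3 (by omega) (by omega))
              · rcases List.mem_cons.mp hc1 with hc3 | hc3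
                · omega
                · exact h123' z b (b + 1) (sub2 z hzq (b + 1) hc3) hzb1 (by omega)
          · exact h123' z a b (sub1 z hzq) hzlta hba1
        · exact hP (T1_fire132 hz hzb1 hzlta)
      have hassorted : (a :: s).Pairwise (· < ·) := List.pairwise_cons.mpr ⟨hsa, hs⟩
      refine ih (q ++ [a]) b (a :: s) out ?_ hassorted hout ?_ ?_ ?_ ?_
      · rw [heq]; simp
      · intro o ho r hr; exact houtrest o ho r (by simp [hr])
      · intro o ho; exact houtrest o ho b (by simp)
      · rw [List.reverse_cons]; exact List.Sublist.append hsubq (List.Sublist.refl [a])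
      · exact (perm_juggle1 out s rest' a b).trans hperm

/-- If a permutation avoids `123` and the bivincular pattern `132*`,
then it is sorted by the `(132,321)`-machine. -/
theorem avoids_implies_sortable (n : ℕ) (x : List ℕ) (hx : IsPermList n x)
    (h123 : containsPat [1,2,3] x = false) (hstar : ¬ Has132Star x) :
    westSort (sT [[1,3,2],[3,2,1]] x) = idPerm n := by
  have hnd : x.Nodup := hx.symm.nodup (List.nodup_range' (s := 1) (n := n))
  have hmem : ∀ a ∈ x, 1 ≤ a ∧ a < 1 + n := by
    intro a ha
    have := hx.mem_iff.mp ha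
    rwa [List.mem_range'_1] at this
  have hval : ∀ a ∈ x, ∀ c : ℕ, 1 ≤ c → c ≤ a → c ∈ x := by
    intro a ha c h1 h2
    have h3 := hmem a ha
    exact hx.mem_iff.mpr (List.mem_range'_1.mpr ⟨h1, by omega⟩)
  cases x with
  | nil =>
    have hn : n = 0 := by simpa using hx.length_eq.symm
    subst hn
    rfl
  | cons x0 xs =>
    have hstep : sT [[1,3,2],[3,2,1]] (x0 :: xs) = stkAux T1 xs [x0] [] := rfl
    obtain ⟨u, v, heqy, hu, hv⟩ :=
      main_inv (x0 :: xs) hnd h123 hstar hval xs [] x0 [] []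
        (by simp) (by simp) (by simp) (by simp) (by simp) (by simp) (by simp)
    have hpy : (stkAux T1 xs [x0] []).Perm (List.range' 1 n) := by
      refine (stkAux_perm T1 xs [x0] []).trans ?_
      simpa [IsPermList] using hx
    rw [hstep, idPerm]
    exact west_eq heqy hu hv hpy
end

section
/- If x avoids both 123 and the bivincular pattern 132*, then the permutation obtained from x by deleting its maximum entry n also avoids 123 and 132*. -/
lemma containsPat_sublist {p w w' : List ℕ} (h : w'.Sublist w)
    (hc : containsPat p w' = true) : containsPat p w = true := by
  simp only [containsPat, List.any_eq_true] at *
  obtain ⟨l, hl, hiso⟩ := hc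
  rw [List.mem_sublistsLen] at hl
  exact ⟨l, List.mem_sublistsLen.2 ⟨hl.1.trans h, hl.2⟩, hiso⟩

lemma iso123_s8 {a b c : ℕ} (h1 : a < b) (h2 : b < c) : isoOrd [1,2,3] [a,b,c] = true := by
  simp [isoOrd, List.range_succ]
  omega

lemma triple_sublist {x : List ℕ} {i j k : ℕ} (hij : i < j) (hjk : j < k)
    (hk : k < x.length) :
    [x.getD i 0, x.getD j 0, x.getD k 0].Sublist x := by
  have hi : i < x.length := by omega
  have hj : j < x.length := by omega
  rw [List.getD_eq_getElem _ _ hi, List.getD_eq_getElem _ _ hj, List.getD_eq_getElem _ _ hk]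
  have := List.map_getElem_sublist (l := x) (is := [⟨i, hi⟩, ⟨j, hj⟩, ⟨k, hk⟩]) (by simp; omega)
  simpa [List.get_eq_getElem] using this

lemma contains123_of {x : List ℕ} {i j k : ℕ} (hij : i < j) (hjk : j < k)
    (hk : k < x.length) (h1 : x.getD i 0 < x.getD j 0) (h2 : x.getD j 0 < x.getD k 0) :
    containsPat [1,2,3] x = true :=
  containsPat_sublist (triple_sublist hij hjk hk) (by
    simp only [containsPat, List.any_eq_true]
    exact ⟨_, List.mem_sublistsLen.2 ⟨List.Sublist.refl _, rfl⟩, iso123_s8 h1 h2⟩)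

/-- Deleting the maximum entry preserves avoidance of `123` and `132*`. -/
theorem erase_max_avoids (n : ℕ) (x : List ℕ) (hx : IsPermList n x)
    (h123 : containsPat [1,2,3] x = false) (hstar : ¬ Has132Star x) :
    containsPat [1,2,3] (x.erase n) = false ∧ ¬ Has132Star (x.erase n) := by
  constructor
  · by_contra h
    rw [Bool.not_eq_false] at h
    rw [containsPat_sublist (x.erase_sublist (a := n)) h] at h123
    simp at h123
  · by_cases hn : n ∈ x
    · obtain ⟨A, B, hnA, hxAB, hErase⟩ := List.exists_erase_eq hn
      rintro ⟨i, j, hij, hj1, hlt, heq⟩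
      rw [hErase] at hj1 hlt heq
      set m := A.length with hm
      have hlen : (A ++ B).length + 1 = x.length := by rw [hxAB]; simp; omega
      have hlow : ∀ k, k < m → (A ++ B).getD k 0 = x.getD k 0 := by
        intro k hk
        rw [hxAB, List.getD_append _ _ _ _ hk, List.getD_append _ _ _ _ hk]
      have hhigh : ∀ k, m ≤ k → (A ++ B).getD k 0 = x.getD (k + 1) 0 := by
        intro k hk
        rw [hxAB, List.getD_append_right _ _ _ _ hk,
          List.getD_append_right _ _ _ _ (by omega : m ≤ k + 1)]
        have : k + 1 - m = (k - m) + 1 := by omega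
        rw [this, List.getD_cons_succ]
      rcases lt_trichotomy (j + 1) m with hc | hc | hc
      · exact hstar ⟨i, j, hij, by omega,
          by rw [← hlow i (by omega), ← hlow (j+1) hc]; exact hlt,
          by rw [← hlow j (by omega), ← hlow (j+1) hc]; exact heq⟩
      · -- j + 1 = m : the deleted n sat between positions j and j+1
        have hjm : j < m := by omega
        have hxm : x.getD m 0 = n := by
          rw [hxAB, List.getD_append_right _ _ _ _ (le_refl m)]
          simp [hm]
        have ha : x.getD j 0 < n := by
          have hjA : j < A.length := hjm
          have hAe : x.getD j 0 = A.getD j 0 := by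
            rw [hxAB]; exact List.getD_append _ _ _ _ hjA
          have hmem : x.getD j 0 ∈ A := by
            rw [hAe, List.getD_eq_getElem _ _ hjA]; exact List.getElem_mem hjA
          have hne : x.getD j 0 ≠ n := fun h => hnA (h ▸ hmem)
          have hjx : j < x.length := by omega
          have hmx : x.getD j 0 ∈ x := by
            rw [List.getD_eq_getElem _ _ hjx]; exact List.getElem_mem hjx
          have := hx.mem_iff.mp hmx
          rw [List.mem_range'] at this
          omega
        rw [hlow i (by omega)] at hlt
        rw [hlow j hjm] at heq
        have h1 : x.getD i 0 < x.getD j 0 := by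
          rw [heq]; omega
        have := contains123_of hij (show j < m from hjm) (by omega) h1 (by rw [hxm]; exact ha)
        rw [this] at h123
        simp at h123
      · -- m ≤ j
        have hmj : m ≤ j := by omega
        have hj' : (A ++ B).getD j 0 = x.getD (j+1) 0 := hhigh j hmj
        have hj1' : (A ++ B).getD (j+1) 0 = x.getD (j+2) 0 := hhigh (j+1) (by omega)
        by_cases hi : i < m
        · exact hstar ⟨i, j + 1, by omega, by omega,
            by rw [← hlow i hi, ← hj1']; exact hlt,
            by rw [← hj', ← hj1']; exact heq⟩
        · exact hstar ⟨i + 1, j + 1, by omega, by omega,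
            by rw [← hhigh i (by omega), ← hj1']; exact hlt,
            by rw [← hj', ← hj1']; exact heq⟩
    · rw [List.erase_of_not_mem hn]
      exact hstar
end

section
/- If x ∈ S_n avoids 123 and x_1 ≠ n, then the set of active sites of x with respect to 123 is exactly {1, 2, ..., ind_x(n)}, where ind_x(n) is the position of n in x. -/
lemma isoOrd123 (a b c : ℕ) : isoOrd [1,2,3] [a,b,c] = true ↔ a < b ∧ b < c := by
  simp [isoOrd, List.range_succ]
  omega

lemma containsPat123 (w : List ℕ) :
    containsPat [1,2,3] w = true ↔ ∃ a b c, a < b ∧ b < c ∧ List.Sublist [a,b,c] w := by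
  simp only [containsPat, List.any_eq_true, List.mem_sublistsLen]
  constructor
  · rintro ⟨l, ⟨hs, hl⟩, hiso⟩
    match l, hl with
    | [a,b,c], _ =>
      rw [isoOrd123] at hiso
      exact ⟨a, b, c, hiso.1, hiso.2, hs⟩
  · rintro ⟨a, b, c, h1, h2, hs⟩
    exact ⟨[a,b,c], ⟨hs, rfl⟩, (isoOrd123 a b c).2 ⟨h1, h2⟩⟩

lemma insertIdx_eq_take_drop (l : List ℕ) (a : ℕ) (k : ℕ) (h : k ≤ l.length) :
    l.insertIdx k a = l.take k ++ a :: l.drop k := by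
  induction l generalizing k with
  | nil => simp_all
  | cons hd tl ih =>
    cases k with
    | zero => simp
    | succ k => simp_all [List.insertIdx_succ_cons]

/-- If `x ∈ Av_n(123)` and `x₁ ≠ n`, then the active sites of `x` with respect to `123`
are exactly `{1, …, ind_x(n)}` (sites and `ind` 1-based). -/
theorem active_sites_initial_interval (n : ℕ) (x : List ℕ) (hx : IsPermList n x)
    (hn : 1 ≤ n) (h123 : containsPat [1,2,3] x = false) (hfirst : x.getD 0 0 ≠ n) :
    ∀ j, 1 ≤ j → j ≤ n + 1 →
      (containsPat [1,2,3] (x.insertIdx (j-1) (n+1)) = false ↔ j ≤ x.idxOf n + 1) := by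
  have hlen : x.length = n := by
    have := hx.length_eq; simpa using this
  have hmemx : ∀ m ∈ x, m ≤ n := by
    intro m hm
    have := hx.mem_iff.1 hm
    simp [List.mem_range'] at this
    omega
  have hnmem : n ∈ x := by
    rw [hx.mem_iff, List.mem_range']; exact ⟨n-1, by omega, by omega⟩
  set k := x.idxOf n with hkdef
  have hk : k < x.length := List.idxOf_lt_length_iff.2 hnmem
  have hget : x[k]'hk = n := List.getElem_idxOf hk
  have hnd : x.Nodup := hx.nodup_iff.2 List.nodup_range'
  -- n is not in take k x
  have hntake : n ∉ x.take k := by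
    intro hmem
    have hdec : x.take k ++ x.drop k = x := List.take_append_drop k x
    have : x.Nodup := hnd
    rw [← hdec, List.nodup_append] at this
    refine this.2.2 n hmem n ?_ rfl
    rw [List.drop_eq_getElem_cons hk, hget]
    exact List.mem_cons_self
  -- decomposition x = take k x ++ n :: drop (k+1) x
  have hdecomp : x = x.take k ++ n :: x.drop (k+1) := by
    conv_lhs => rw [← List.take_append_drop k x]
    rw [List.drop_eq_getElem_cons hk, hget]
  have hk0 : 1 ≤ k := by
    rcases Nat.eq_zero_or_pos k with h0 | h0
    · exfalso; apply hfirst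
      have h0' : (0:ℕ) < x.length := by omega
      rw [List.getD_eq_getElem _ _ h0']
      rw [← hget]; congr 1; omega
    · exact h0
  -- no 123 pattern in x, in sublist form
  have hx123 : ¬ ∃ a b c, a < b ∧ b < c ∧ List.Sublist [a,b,c] x := by
    rw [← containsPat123]; simp [h123]
  intro j hj1 hj2
  set p := j - 1 with hpdef
  have hpn : p ≤ x.length := by omega
  rw [insertIdx_eq_take_drop x (n+1) p hpn]
  constructor
  · -- avoids → p ≤ k
    intro havoid
    by_contra hgt
    have hpk : k + 1 ≤ p := by omega
    -- build pattern [x[0], n, n+1]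
    have h0 : (0:ℕ) < x.length := by omega
    set a := x[0]'h0 with hadef
    have ha : a < n := by
      have h1 : a ≤ n := hmemx a (List.getElem_mem h0)
      have h2 : a ≠ n := by
        intro h; apply hfirst; rw [List.getD_eq_getElem _ _ h0]; exact h
      omega
    have hmtake : a ∈ x.take k := by
      have hlt : 0 < (x.take k).length := by
        rw [List.length_take]; omega
      have : (x.take k)[0]'hlt = a := List.getElem_take
      rw [← this]; exact List.getElem_mem hlt
    have hsub1 : List.Sublist [a, n] (x.take (k+1)) := by
      have ht : x.take (k+1) = x.take k ++ [n] := by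
        rw [List.take_succ, List.getElem?_eq_getElem hk, hget]; rfl
      rw [ht]
      have h1 : List.Sublist [a] (x.take k) := List.singleton_sublist.2 hmtake
      exact List.Sublist.append h1 (List.Sublist.refl [n])
    have hsub2 : List.Sublist (x.take (k+1)) (x.take p) := by
      have := List.take_sublist (k+1) (x.take p)
      rwa [List.take_take, min_eq_left hpk] at this
    have hsub3 : List.Sublist [a, n, n+1] (x.take p ++ (n+1) :: x.drop p) := by
      have : ([a,n] ++ [n+1] : List ℕ) = [a,n,n+1] := rfl
      rw [← this]
      exact List.Sublist.append (hsub1.trans hsub2)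
        (List.singleton_sublist.2 (List.mem_cons_self))
    have : containsPat [1,2,3] (x.take p ++ (n+1) :: x.drop p) = true :=
      (containsPat123 _).2 ⟨a, n, n+1, ha, Nat.lt_succ_self n, hsub3⟩
    rw [havoid] at this; exact Bool.false_ne_true this
  · -- p ≤ k → avoids
    intro hle
    have hpk : p ≤ k := by omega
    rw [Bool.eq_false_iff]
    intro htrue
    obtain ⟨a, b, c, hab, hbc, hs⟩ := (containsPat123 _).1 htrue
    rw [List.sublist_append_iff] at hs
    obtain ⟨l₁, l₂, heq, h1, h2⟩ := hs
    rw [List.sublist_cons_iff] at h2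
    rcases h2 with h2 | ⟨r, hr, h2⟩
    · -- pattern entirely in x
      apply hx123
      refine ⟨a, b, c, hab, hbc, ?_⟩
      have : List.Sublist (l₁ ++ l₂) (x.take p ++ x.drop p) := List.Sublist.append h1 h2
      rw [← heq] at this; rw [List.take_append_drop] at this
      exact this
    · -- n+1 is used
      subst hr
      -- elements of r are in x, so ≤ n
      have hrx : ∀ m ∈ r, m ≤ n := fun m hm =>
        hmemx m (List.Sublist.subset (h2.trans (List.drop_sublist p x)) hm)
      have hl1x : ∀ m ∈ l₁, m ∈ x.take p :=
        fun m hm => List.Sublist.subset h1 hm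
      match l₁, heq with
      | [], heq =>
        -- a = n+1, b ∈ r
        simp at heq
        obtain ⟨ha', hr'⟩ := heq
        have : b ≤ n := hrx b (by rw [← hr']; simp)
        omega
      | [u], heq =>
        simp at heq
        obtain ⟨hu, hb, hc⟩ := heq
        have : c ≤ n := hrx c (by rw [← hc]; simp)
        omega
      | [u, v], heq =>
        simp at heq
        obtain ⟨hu, hv, hc, hr'⟩ := heq
        -- c = n+1, [a,b] <+ take p x <+ take k x, b < n
        subst hu; subst hv
        have hsub : List.Sublist [a, b] (x.take k) := by
          have hsubp : List.Sublist (x.take p) (x.take k) := by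
            have := List.take_sublist p (x.take k)
            rwa [List.take_take, min_eq_left hpk] at this
          exact h1.trans hsubp
        have hbk : b ∈ x.take k := hsub.subset (by simp)
        have hbn : b < n := by
          have h1' : b ≤ n := hmemx b ((List.take_sublist k x).subset hbk)
          have h2' : b ≠ n := fun h => hntake (h ▸ hbk)
          omega
        apply hx123
        refine ⟨a, b, n, hab, hbn, ?_⟩
        rw [hdecomp]
        have : ([a,b] ++ [n] : List ℕ) = [a,b,n] := rfl
        rw [← this]
        exact List.Sublist.append hsub
          (List.singleton_sublist.2 (List.mem_cons_self))
      | u :: v :: w :: t, heq =>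
        exfalso
        have := congrArg List.length heq
        simp at this
end
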